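/- arXiv:1908.03808 — 5 statements merged into one kernel-verified Lean document; each statement's English description precedes it below -/
import Mathlib

section
/- Upper bound for the transformed equation: Let n ≥ 2 be an integer, λᵢ ≥ 0, and let h : [0,∞) → ℝ be positive and nondecreasing. There exists r₁ ≥ 2 such that the following holds for every r₀ ≥ r₁. Let t : [2,∞) → ℝ be continuous and differentiable on [r₀,∞), and let g : [r₀,∞) → ℝ satisfy |g(r)| ≤ (2/(n−1)) (h(r)/(1+r)) e^{(n−1)r} for all r ≥ r₀. Suppose that for every r ≥ r₀, t'(r) + ((n−1)/2) t(r)² e^{−(n−1)r} + (2λᵢ/(n−1)) e^{(n−1)r} / exp(∫₂^r 2(1 + t(x) e^{−(n−1)x}) dx) = g(r). Then for all r ≥ r₀, t(r) ≤ t(r₀) + 6 (h(r)/(1+r)) e^{(n−1)r}. -/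
open Set

/-- Upper bound for solutions of the transformed equation
(inequality (3.10) in the proof of Lemma 4.1). -/
theorem stmt3 (n : ℕ) (hn : 2 ≤ n) (lamI : ℝ) (hlam : 0 ≤ lamI) (h : ℝ → ℝ)
    (hpos : ∀ x, 0 ≤ x → 0 < h x) (hmono : MonotoneOn h (Ici 0)) :
    ∃ r₁, 2 ≤ r₁ ∧ ∀ r₀ : ℝ, r₁ ≤ r₀ → ∀ t t' g : ℝ → ℝ,
      ContinuousOn t (Ici 2) →
      (∀ r, r₀ ≤ r → HasDerivAt t (t' r) r) →
      (∀ r, r₀ ≤ r →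
        |g r| ≤ 2 / ((n : ℝ) - 1) * (h r / (1 + r)) * Real.exp (((n : ℝ) - 1) * r)) →
      (∀ r, r₀ ≤ r →
        t' r + ((n : ℝ) - 1) / 2 * (t r) ^ 2 * Real.exp (-((n : ℝ) - 1) * r)
          + 2 * lamI / ((n : ℝ) - 1) * Real.exp (((n : ℝ) - 1) * r) /
            Real.exp (∫ x in (2 : ℝ)..r, 2 * (1 + t x * Real.exp (-((n : ℝ) - 1) * x)))
          = g r) →
      ∀ r, r₀ ≤ r → t r ≤ t r₀ + 6 * (h r / (1 + r)) * Real.exp (((n : ℝ) - 1) * r) := by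
  refine ⟨2, le_refl 2, ?_⟩
  intro r₀ hr₀ t t' g _tc ht hg heq R hR
  set c : ℝ := (n : ℝ) - 1 with hc
  have hc1 : (1 : ℝ) ≤ c := by
    have : (2 : ℝ) ≤ (n : ℝ) := by exact_mod_cast hn
    simp only [hc]; linarith
  have hcpos : (0 : ℝ) < c := by linarith
  have hR2 : (2 : ℝ) ≤ R := le_trans hr₀ hR
  have hRpos : (0 : ℝ) ≤ R := by linarith
  have hhR : 0 < h R := hpos R hRpos
  -- t' is bounded above by the bound on g
  have ht'le : ∀ x, r₀ ≤ x → t' x ≤ 2 / c * (h x / (1 + x)) * Real.exp (c * x) := by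
    intro x hx
    have h1 := heq x hx
    have h2 := hg x hx
    have nn1 : 0 ≤ c / 2 * (t x) ^ 2 * Real.exp (-c * x) := by positivity
    have nn2 : 0 ≤ 2 * lamI / c * Real.exp (c * x) /
        Real.exp (∫ y in (2 : ℝ)..x, 2 * (1 + t y * Real.exp (-c * y))) := by positivity
    have h3 := le_abs_self (g x)
    linarith
  -- the comparison function F x = exp (c x) / (1 + x)
  set F : ℝ → ℝ := fun x => Real.exp (c * x) / (1 + x) with hF
  have hFderiv : ∀ x : ℝ, 2 ≤ x →
      HasDerivAt F ((c * Real.exp (c * x) * (1 + x) - Real.exp (c * x)) / (1 + x) ^ 2) x := by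
    intro x hx
    have hne : (1 + x : ℝ) ≠ 0 := by linarith
    have h1 : HasDerivAt (fun y : ℝ => Real.exp (c * y)) (c * Real.exp (c * x)) x := by
      have := ((hasDerivAt_id x).const_mul c).exp
      simpa [mul_comm] using this
    have h2 : HasDerivAt (fun y : ℝ => 1 + y) 1 x := by
      simpa using (hasDerivAt_id x).const_add 1
    have := h1.div h2 hne
    rw [mul_one] at this
    exact this
  set C : ℝ := 4 / c ^ 2 * h R with hCdef
  have hCpos : 0 < C := by positivity
  set ψ : ℝ → ℝ := fun x => t x - C * F x with hψ
  have hψderiv : ∀ x, r₀ ≤ x → HasDerivAt ψ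
      (t' x - C * ((c * Real.exp (c * x) * (1 + x) - Real.exp (c * x)) / (1 + x) ^ 2)) x := by
    intro x hx
    exact (ht x hx).sub (((hFderiv x (le_trans hr₀ hx)).const_mul C))
  -- ψ is antitone on [r₀, R]
  have hanti : AntitoneOn ψ (Icc r₀ R) := by
    apply antitoneOn_of_deriv_nonpos (convex_Icc r₀ R)
    · intro x hx
      exact (hψderiv x hx.1).continuousAt.continuousWithinAt
    · intro x hx
      rw [interior_Icc] at hx
      exact (hψderiv x hx.1.le).differentiableAt.differentiableWithinAt
    · intro x hx
      rw [interior_Icc] at hx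
      have hxr₀ : r₀ ≤ x := hx.1.le
      have hx2 : (2 : ℝ) ≤ x := le_trans hr₀ hxr₀
      rw [(hψderiv x hxr₀).deriv]
      have hb := ht'le x hxr₀
      have hmon : h x ≤ h R := hmono (by simp; linarith) (by simp; linarith) hx.2.le
      have hE : (0 : ℝ) < Real.exp (c * x) := Real.exp_pos _
      have hP : (0 : ℝ) < 1 + x := by linarith
      have hhx : 0 < h x := hpos x (by linarith)
      -- need: t' x ≤ C * (c * E * P - E) / P^2
      have key : 2 / c * (h R / (1 + x)) * Real.exp (c * x) ≤
          C * ((c * Real.exp (c * x) * (1 + x) - Real.exp (c * x)) / (1 + x) ^ 2) := by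
        show 2 / c * (h R / (1 + x)) * Real.exp (c * x) ≤
          4 / c ^ 2 * h R * ((c * Real.exp (c * x) * (1 + x) - Real.exp (c * x)) / (1 + x) ^ 2)
        rw [← sub_nonneg]
        have hid : 4 / c ^ 2 * h R * ((c * Real.exp (c * x) * (1 + x) - Real.exp (c * x)) /
              (1 + x) ^ 2) - 2 / c * (h R / (1 + x)) * Real.exp (c * x)
            = h R * Real.exp (c * x) * (2 * (c * (1 + x)) - 4) / (c ^ 2 * (1 + x) ^ 2) := by
          field_simp
          ring
        rw [hid]
        apply div_nonneg _ (by positivity)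
        have hcP : (3 : ℝ) ≤ c * (1 + x) := by nlinarith
        nlinarith [mul_pos hhR hE]
      have hmon' : 2 / c * (h x / (1 + x)) * Real.exp (c * x) ≤
          2 / c * (h R / (1 + x)) * Real.exp (c * x) := by
        gcongr
      linarith
  have hmem₀ : r₀ ∈ Icc r₀ R := ⟨le_refl _, hR⟩
  have hmemR : R ∈ Icc r₀ R := ⟨hR, le_refl _⟩
  have hfinal := hanti hmem₀ hmemR hR
  simp only [hψ] at hfinal
  -- ψ R ≤ ψ r₀ : t R - C F R ≤ t r₀ - C F r₀
  have hFr₀ : 0 ≤ F r₀ := by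
    have : (0:ℝ) < 1 + r₀ := by linarith
    positivity
  have hFR : F R = Real.exp (c * R) / (1 + R) := rfl
  have hPR : (0 : ℝ) < 1 + R := by linarith
  have hER : (0 : ℝ) < Real.exp (c * R) := Real.exp_pos _
  have hCF : C * F R ≤ 6 * (h R / (1 + R)) * Real.exp (c * R) := by
    have h4 : 4 / c ^ 2 ≤ 6 := by
      rw [div_le_iff₀ (by positivity)]
      nlinarith
    have hpos2 : 0 ≤ h R * (Real.exp (c * R) / (1 + R)) := by positivity
    calc C * F R = 4 / c ^ 2 * (h R * (Real.exp (c * R) / (1 + R))) := by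
          show 4 / c ^ 2 * h R * (Real.exp (c * R) / (1 + R)) = _; ring
      _ ≤ 6 * (h R * (Real.exp (c * R) / (1 + R))) := mul_le_mul_of_nonneg_right h4 hpos2
      _ = 6 * (h R / (1 + R)) * Real.exp (c * R) := by ring
  have hCFr₀ : 0 ≤ C * F r₀ := mul_nonneg hCpos.le hFr₀
  linarith
end

section
/- Two-sided bound for the transformed equation: Let n ≥ 2 be an integer, λᵢ ≥ 0, and let h : [0,∞) → ℝ be positive and nondecreasing with h(x) ≤ 1 + x^{1/10} for all x ≥ 0. There exists r₁ ≥ 2 such that the following holds for every r₀ ≥ r₁. Let t : [2,∞) → ℝ be continuous and differentiable on [r₀,∞) with t(x) ≥ 0 for 2 ≤ x ≤ r₀, and let g : [r₀,∞) → ℝ satisfy |g(r)| ≤ (2/(n−1)) (h(r)/(1+r)) e^{(n−1)r} for all r ≥ r₀. Suppose that for every r ≥ r₀, t'(r) + ((n−1)/2) t(r)² e^{−(n−1)r} + (2λᵢ/(n−1)) e^{(n−1)r} / exp(∫₂^r 2(1 + t(x) e^{−(n−1)x}) dx) = g(r). Then for all r ≥ r₀, |t(r)| ≤ t(r₀) +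 10 (h(r)/(1+r)) e^{(n−1)r}. -/
open Set Filter


lemma mono_of_deriv {f f' : ℝ → ℝ} {a b : ℝ} (hab : a ≤ b)
    (hc : ContinuousOn f (Icc a b))
    (hd : ∀ x ∈ Ioo a b, HasDerivAt f (f' x) x)
    (h0 : ∀ x ∈ Ioo a b, 0 ≤ f' x) : f a ≤ f b := by
  have hm := monotoneOn_of_deriv_nonneg (convex_Icc a b) hc
    (fun x hx => by
      rw [interior_Icc] at hx
      exact (hd x hx).differentiableAt.differentiableWithinAt)
    (fun x hx => by
      rw [interior_Icc] at hx
      rw [(hd x hx).deriv]; exact h0 x hx)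
  exact hm ⟨le_rfl, hab⟩ ⟨hab, le_rfl⟩ hab

lemma expDiv_mono {ν a b : ℝ} (hν : 1 ≤ ν) (ha : 0 ≤ a) (hab : a ≤ b) :
    Real.exp (ν * a) / (1 + a) ≤ Real.exp (ν * b) / (1 + b) := by
  have ha1 : (0:ℝ) < 1 + a := by linarith
  rw [div_le_div_iff₀ (by linarith) (by linarith)]
  have h1 : (b - a) + 1 ≤ Real.exp (b - a) := Real.add_one_le_exp _
  have h2 : Real.exp (ν * a) * Real.exp (b - a) ≤ Real.exp (ν * b) := by
    rw [← Real.exp_add]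
    apply Real.exp_le_exp.2
    nlinarith
  have h3 : (0:ℝ) < Real.exp (ν * a) := Real.exp_pos _
  have hstep : 1 + b ≤ (1 + a) * Real.exp (b - a) := by nlinarith
  calc Real.exp (ν * a) * (1 + b) ≤ Real.exp (ν * a) * ((1 + a) * Real.exp (b - a)) := by
        nlinarith [mul_le_mul_of_nonneg_left hstep h3.le]
    _ = (Real.exp (ν * a) * Real.exp (b - a)) * (1 + a) := by ring
    _ ≤ Real.exp (ν * b) * (1 + a) := by nlinarith

lemma hasDerivAt_expDiv1 (ν x : ℝ) (hx : (0:ℝ) ≤ x) :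
    HasDerivAt (fun y => Real.exp (ν * y) / (1 + y))
      ((ν * Real.exp (ν * x) * (1 + x) - Real.exp (ν * x)) / (1 + x) ^ 2) x := by
  have h1 : HasDerivAt (fun y : ℝ => Real.exp (ν * y)) (ν * Real.exp (ν * x)) x := by
    simpa [mul_comm] using ((hasDerivAt_id x).const_mul ν).exp
  have h2 : HasDerivAt (fun y : ℝ => 1 + y) 1 x := by
    simpa using (hasDerivAt_id x).const_add 1
  have := h1.div h2 (by linarith : (1:ℝ) + x ≠ 0)
  rw [mul_one] at this
  exact this

lemma hasDerivAt_expDiv2 (ν x : ℝ) (hx : (0:ℝ) ≤ x) :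
    HasDerivAt (fun y => Real.exp (ν * y) / (1 + y) ^ 2)
      ((ν * Real.exp (ν * x) * (1 + x) ^ 2 - Real.exp (ν * x) * (2 * (1 + x))) / ((1 + x) ^ 2) ^ 2)
      x := by
  have h1 : HasDerivAt (fun y : ℝ => Real.exp (ν * y)) (ν * Real.exp (ν * x)) x := by
    simpa [mul_comm] using ((hasDerivAt_id x).const_mul ν).exp
  have h2 : HasDerivAt (fun y : ℝ => (1 + y) ^ 2) (2 * (1 + x)) x := by
    have h3 : HasDerivAt (fun y : ℝ => 1 + y) 1 x := by
      simpa using (hasDerivAt_id x).const_add 1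
    simpa using h3.fun_pow 2
  exact h1.div h2 (by positivity)

lemma hasDerivAt_xexp (c x : ℝ) :
    HasDerivAt (fun y => y * Real.exp (c * y)) (Real.exp (c * x) + x * (c * Real.exp (c * x))) x := by
  have h1 : HasDerivAt (fun y : ℝ => Real.exp (c * y)) (c * Real.exp (c * x)) x := by
    simpa [mul_comm] using ((hasDerivAt_id x).const_mul c).exp
  simpa using (hasDerivAt_id x).fun_mul h1

lemma deriv1_lower {ν x : ℝ} (hν : 1 ≤ ν) (hx : 3 ≤ x) :
    ν / 2 * (Real.exp (ν * x) / (1 + x)) ≤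
      (ν * Real.exp (ν * x) * (1 + x) - Real.exp (ν * x)) / (1 + x) ^ 2 := by
  have h4 : (0:ℝ) < 1 + x := by linarith
  have h3 : (0:ℝ) < Real.exp (ν * x) := Real.exp_pos _
  rw [show ν / 2 * (Real.exp (ν * x) / (1 + x)) = ν * Real.exp (ν * x) / 2 / (1 + x) by ring]
  rw [div_le_div_iff₀ h4 (by positivity)]
  have key : (1:ℝ) ≤ ν / 2 * (1 + x) := by nlinarith
  nlinarith [mul_le_mul_of_nonneg_left key (le_of_lt (mul_pos h3 h4))]

lemma deriv2_lower {ν x : ℝ} (hν : 1 ≤ ν) (hx : 3 ≤ x) :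
    ν / 2 * (Real.exp (ν * x) / (1 + x) ^ 2) ≤
      (ν * Real.exp (ν * x) * (1 + x) ^ 2 - Real.exp (ν * x) * (2 * (1 + x))) / ((1 + x) ^ 2) ^ 2 := by
  have h4 : (0:ℝ) < 1 + x := by linarith
  have h3 : (0:ℝ) < Real.exp (ν * x) := Real.exp_pos _
  rw [show ν / 2 * (Real.exp (ν * x) / (1 + x) ^ 2) = ν * Real.exp (ν * x) / 2 / (1 + x) ^ 2 by ring]
  rw [div_le_div_iff₀ (by positivity) (by positivity)]
  have key : (2:ℝ) ≤ ν / 2 * (1 + x) := by nlinarith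
  nlinarith [mul_le_mul_of_nonneg_left key (le_of_lt (mul_pos h3 (mul_pos h4 (mul_pos h4 h4))))]


lemma exists_r1 (lamI h0 : ℝ) (hlam : 0 ≤ lamI) (hh0 : 0 < h0) :
    ∃ r₁ : ℝ, 800 ≤ r₁ ∧ ∀ x, r₁ ≤ x →
      x ^ (-((9:ℝ)/10)) ≤ 1/800 ∧ 2*lamI*x*(1+x) ≤ h0 * Real.exp x := by
  have h1 : Tendsto (fun x : ℝ => x ^ (-((9:ℝ)/10))) atTop (nhds 0) :=
    tendsto_rpow_neg_atTop (by norm_num)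
  have ev1 : ∀ᶠ x : ℝ in atTop, x ^ (-((9:ℝ)/10)) ≤ 1/800 :=
    h1.eventually (eventually_le_nhds (by norm_num))
  have h2 : Tendsto (fun x : ℝ => (4*lamI+1) * (x^2 * Real.exp (-x))) atTop (nhds 0) := by
    simpa using (Real.tendsto_pow_mul_exp_neg_atTop_nhds_zero 2).const_mul (4*lamI+1)
  have ev2 : ∀ᶠ x : ℝ in atTop, (4*lamI+1) * (x^2 * Real.exp (-x)) ≤ h0 :=
    h2.eventually (eventually_le_nhds hh0)
  have ev3 : ∀ᶠ x : ℝ in atTop, (800:ℝ) ≤ x := eventually_ge_atTop 800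
  obtain ⟨a, ha⟩ := eventually_atTop.mp ((ev1.and ev2).and ev3)
  refine ⟨max 800 a, le_max_left _ _, fun x hx => ?_⟩
  obtain ⟨⟨hA, hB⟩, hC⟩ := ha x (le_trans (le_max_right _ _) hx)
  refine ⟨hA, ?_⟩
  have e1 : Real.exp (-x) * Real.exp x = 1 := by rw [← Real.exp_add]; simp
  have hxp : (0:ℝ) < Real.exp x := Real.exp_pos x
  have hB' := mul_le_mul_of_nonneg_right hB hxp.le
  have hB2 : (4*lamI+1)*x^2 ≤ h0*Real.exp x := by
    have heq : (4*lamI+1)*(x^2*Real.exp (-x))*Real.exp x = (4*lamI+1)*x^2 := by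
      linear_combination ((4*lamI+1)*x^2) * e1
    linarith
  have hxx : x ≤ x^2 := by nlinarith
  nlinarith [mul_le_mul_of_nonneg_left hxx hlam]

lemma point_facts {x : ℝ} (hx800 : 800 ≤ x) (hx9 : x ^ (-((9:ℝ)/10)) ≤ 1/800) :
    x ^ ((1:ℝ)/10) ≤ x/800 ∧ Real.log x ≤ 10 * x^((1:ℝ)/10) - 10 := by
  have hx0 : (0:ℝ) < x := by linarith
  have h1 : x ^ ((1:ℝ)/10) = x * x ^ (-((9:ℝ)/10)) := by
    have := Real.rpow_add hx0 1 (-((9:ℝ)/10))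
    norm_num at this
    rw [show ((1:ℝ)/10) = 1 + -((9:ℝ)/10) by norm_num, Real.rpow_add hx0, Real.rpow_one]
  constructor
  · rw [h1]
    calc x * x ^ (-((9:ℝ)/10)) ≤ x * (1/800) := by
          exact mul_le_mul_of_nonneg_left hx9 hx0.le
      _ = x/800 := by ring
  · have h2 : Real.log (x ^ ((1:ℝ)/10)) = (1/10) * Real.log x := Real.log_rpow hx0 _
    have h3 : Real.log (x ^ ((1:ℝ)/10)) ≤ x ^ ((1:ℝ)/10) - 1 :=
      Real.log_le_sub_one_of_pos (Real.rpow_pos_of_pos hx0 _)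
    linarith


set_option maxHeartbeats 1000000 in
/-- Two-sided bound for solutions of the transformed equation
(inequality (3.14) in the proof of Lemma 4.1). -/
theorem stmt4 (n : ℕ) (hn : 2 ≤ n) (lamI : ℝ) (hlam : 0 ≤ lamI) (h : ℝ → ℝ)
    (hpos : ∀ x, 0 ≤ x → 0 < h x) (hmono : MonotoneOn h (Ici 0))
    (hgrow : ∀ x, 0 ≤ x → h x ≤ 1 + x ^ ((1 : ℝ) / 10)) :
    ∃ r₁, 2 ≤ r₁ ∧ ∀ r₀ : ℝ, r₁ ≤ r₀ → ∀ t t' g : ℝ → ℝ,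
      ContinuousOn t (Ici 2) →
      (∀ r, r₀ ≤ r → HasDerivAt t (t' r) r) →
      (∀ x, 2 ≤ x → x ≤ r₀ → 0 ≤ t x) →
      (∀ r, r₀ ≤ r →
        |g r| ≤ 2 / ((n : ℝ) - 1) * (h r / (1 + r)) * Real.exp (((n : ℝ) - 1) * r)) →
      (∀ r, r₀ ≤ r →
        t' r + ((n : ℝ) - 1) / 2 * (t r) ^ 2 * Real.exp (-((n : ℝ) - 1) * r)
          + 2 * lamI / ((n : ℝ) - 1) * Real.exp (((n : ℝ) - 1) * r) /
            Real.exp (∫ x in (2 : ℝ)..r, 2 * (1 + t x * Real.exp (-((n : ℝ) - 1) * x)))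
          = g r) →
      ∀ r, r₀ ≤ r → |t r| ≤ t r₀ + 10 * (h r / (1 + r)) * Real.exp (((n : ℝ) - 1) * r) := by
  have hn2 : (2:ℝ) ≤ (n:ℝ) := by exact_mod_cast hn
  obtain ⟨ν, hνdef⟩ : ∃ y : ℝ, y = (n:ℝ) - 1 := ⟨_, rfl⟩
  rw [← hνdef]
  have hν : 1 ≤ ν := by rw [hνdef]; linarith
  have hνpos : 0 < ν := by linarith
  have hν2pos : 0 < ν ^ 2 := pow_pos hνpos 2
  have hh0 : 0 < h 0 := hpos 0 le_rfl
  obtain ⟨r₁, hr₁800, hr₁spec⟩ := exists_r1 lamI (h 0) hlam hh0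
  refine ⟨r₁, by linarith, ?_⟩
  intro r₀ hr₀ t t' g htc htd htpos hg hode
  have hr₀800 : 800 ≤ r₀ := le_trans hr₁800 hr₀
  have hr₀2 : (2:ℝ) ≤ r₀ := by linarith
  have ht0 : 0 ≤ t r₀ := htpos r₀ hr₀2 le_rfl
  have hquad_nn : ∀ x : ℝ, 0 ≤ ν / 2 * t x ^ 2 * Real.exp (-ν * x) := fun x =>
    mul_nonneg (mul_nonneg (by linarith) (sq_nonneg _)) (Real.exp_pos _).le
  have hlam_nn : ∀ x : ℝ,
      0 ≤ 2 * lamI / ν * Real.exp (ν * x) /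
        Real.exp (∫ y in (2:ℝ)..x, 2 * (1 + t y * Real.exp (-ν * y))) := by
    intro x
    apply div_nonneg _ (Real.exp_pos _).le
    exact mul_nonneg (div_nonneg (by linarith) hνpos.le) (Real.exp_pos _).le
  ---------------------------------------------------------------- upper bound
  have hup : ∀ R, r₀ ≤ R → t R ≤ t r₀ + 4 / ν ^ 2 * h R * (Real.exp (ν * R) / (1 + R)) := by
    intro R hR
    have hhR : 0 < h R := hpos R (by linarith)
    have hcont : ContinuousOn
        (fun x => 4 / ν ^ 2 * h R * (Real.exp (ν * x) / (1 + x)) - t x) (Icc r₀ R) := by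
      apply ContinuousOn.sub
      · apply continuousOn_const.mul
        apply ContinuousOn.div
        · exact (Real.continuous_exp.comp (continuous_const.mul continuous_id)).continuousOn
        · exact (continuous_const.add continuous_id).continuousOn
        · intro x hx
          have h1 := hx.1
          intro hc'
          have : x = -1 := by linarith
          linarith
      · exact htc.mono (fun x hx => le_trans hr₀2 hx.1)
    have hkey := mono_of_deriv hR hcont
      (f' := fun x => 4 / ν ^ 2 * h R *
        ((ν * Real.exp (ν * x) * (1 + x) - Real.exp (ν * x)) / (1 + x) ^ 2) - t' x)
      (fun x hx => ((hasDerivAt_expDiv1 ν x (by linarith [hx.1])).const_mul _).sub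
        (htd x hx.1.le))
      (fun x hx => by
        have hode' := hode x hx.1.le
        have hq := hquad_nn x
        have hl := hlam_nn x
        obtain ⟨E2, hE2⟩ : ∃ v : ℝ, v = Real.exp
            (∫ y in (2:ℝ)..x, 2 * (1 + t y * Real.exp (-ν * y))) := ⟨_, rfl⟩
        rw [← hE2] at hode' hl
        have hgx := hg x hx.1.le
        have hhx : h x ≤ h R := hmono (mem_Ici.2 (by linarith [hx.1])) (mem_Ici.2 (by linarith))
          hx.2.le
        have hx3 : (3:ℝ) ≤ x := by linarith [hx.1]
        have h1x : (0:ℝ) < 1 + x := by linarith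
        have hd1 := deriv1_lower hν hx3
        have hupos : (0:ℝ) < Real.exp (ν * x) / (1 + x) := div_pos (Real.exp_pos _) h1x
        have c1 : |g x| ≤ 2 / ν * h R * (Real.exp (ν * x) / (1 + x)) := by
          calc |g x| ≤ 2 / ν * (h x / (1 + x)) * Real.exp (ν * x) := hgx
            _ = 2 / ν * h x * (Real.exp (ν * x) / (1 + x)) := by ring
            _ ≤ 2 / ν * h R * (Real.exp (ν * x) / (1 + x)) := by
                apply mul_le_mul_of_nonneg_right _ hupos.le
                exact mul_le_mul_of_nonneg_left hhx (div_nonneg (by norm_num) hνpos.le)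
        have c2 : 2 / ν * h R * (Real.exp (ν * x) / (1 + x)) ≤ 4 / ν ^ 2 * h R *
            ((ν * Real.exp (ν * x) * (1 + x) - Real.exp (ν * x)) / (1 + x) ^ 2) := by
          calc 2 / ν * h R * (Real.exp (ν * x) / (1 + x))
              = 4 / ν ^ 2 * h R * (ν / 2 * (Real.exp (ν * x) / (1 + x))) := by
                field_simp
                ring
            _ ≤ _ := mul_le_mul_of_nonneg_left hd1
                (mul_nonneg (div_nonneg (by norm_num) hν2pos.le) hhR.le)
        have habs := le_abs_self (g x)
        linarith only [hode', hq, hl, c1, c2, habs])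
    have hu0 : 0 ≤ 4 / ν ^ 2 * h R * (Real.exp (ν * r₀) / (1 + r₀)) :=
      mul_nonneg (mul_nonneg (div_nonneg (by norm_num) hν2pos.le) hhR.le)
        (div_nonneg (Real.exp_pos _).le (by linarith))
    linarith only [hkey, hu0]
  ---------------------------------------------------------------- lower bound
  have hlow : ∀ R, r₀ ≤ R → -(10 * h R * (Real.exp (ν * R) / (1 + R))) ≤ t R := by
    intro R hR
    by_contra hcon
    push_neg at hcon
    set B : Set ℝ := {x | x ∈ Icc r₀ R ∧ t x ≤ -(10 * h x * (Real.exp (ν * x) / (1 + x)))}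
      with hBdef
    have hRB : R ∈ B := ⟨⟨hR, le_rfl⟩, hcon.le⟩
    have hBne : B.Nonempty := ⟨R, hRB⟩
    have hBbd : BddBelow B := ⟨r₀, fun y hy => hy.1.1⟩
    obtain ⟨c, hcdef⟩ : ∃ y : ℝ, y = sInf B := ⟨_, rfl⟩
    have hcr₀ : r₀ ≤ c := by rw [hcdef]; exact le_csInf hBne fun y hy => hy.1.1
    have hcR : c ≤ R := by rw [hcdef]; exact csInf_le hBbd hRB
    have hc800 : 800 ≤ c := by linarith
    have hc0 : (0:ℝ) ≤ c := by linarith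
    have hc1 : (0:ℝ) < 1 + c := by linarith
    have hhc : 0 < h c := hpos c hc0
    have hcE : (0:ℝ) < Real.exp (ν * c) := Real.exp_pos _
    have hucpos : (0:ℝ) < Real.exp (ν * c) / (1 + c) := div_pos hcE hc1
    have hctle : t c ≤ -(10 * h c * (Real.exp (ν * c) / (1 + c))) := by
      obtain ⟨s, -, hstend, hsmem⟩ := exists_seq_tendsto_sInf hBne hBbd
      rw [← hcdef] at hstend
      have hct : ContinuousAt t c := htc.continuousAt (Ici_mem_nhds (by linarith : (2:ℝ) < c))
      refine le_of_tendsto (hct.tendsto.comp hstend) (Eventually.of_forall fun k => ?_)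
      have hmem := hsmem k
      have hks : c ≤ s k := by rw [hcdef]; exact csInf_le hBbd hmem
      have h1 : h c ≤ h (s k) := hmono (mem_Ici.2 hc0) (mem_Ici.2 (by linarith)) hks
      have h2 : Real.exp (ν * c) / (1 + c) ≤ Real.exp (ν * s k) / (1 + s k) :=
        expDiv_mono hν hc0 hks
      have h3 := hmem.2
      have h4 : h c * (Real.exp (ν * c) / (1 + c)) ≤ h (s k) * (Real.exp (ν * s k) / (1 + s k)) :=
        mul_le_mul h1 h2 hucpos.le (hpos (s k) (by linarith)).le
      show t (s k) ≤ -(10 * h c * (Real.exp (ν * c) / (1 + c)))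
      linarith only [h3, h4]
    have hφc : 0 < h c * (Real.exp (ν * c) / (1 + c)) := mul_pos hhc hucpos
    have hmin : ∀ x, r₀ ≤ x → x < c → -(10 * h x * (Real.exp (ν * x) / (1 + x))) < t x := by
      intro x h1 h2
      by_contra hcon2
      push_neg at hcon2
      have : c ≤ x := by rw [hcdef]; exact csInf_le hBbd ⟨⟨h1, by linarith⟩, hcon2⟩
      linarith
    set Z : Set ℝ := {x | x ∈ Icc r₀ c ∧ 0 ≤ t x} with hZdef
    have hr₀Z : r₀ ∈ Z := ⟨⟨le_rfl, hcr₀⟩, ht0⟩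
    have hZne : Z.Nonempty := ⟨r₀, hr₀Z⟩
    have hZbd : BddAbove Z := ⟨c, fun y hy => hy.1.2⟩
    obtain ⟨ρ, hρdef⟩ : ∃ y : ℝ, y = sSup Z := ⟨_, rfl⟩
    have hρr₀ : r₀ ≤ ρ := by rw [hρdef]; exact le_csSup hZbd hr₀Z
    have hρc : ρ ≤ c := by rw [hρdef]; exact csSup_le hZne fun y hy => hy.1.2
    have hρ2 : (2:ℝ) < ρ := by linarith
    have hρ0nn : (0:ℝ) ≤ ρ := by linarith
    have hρ0 : 0 ≤ t ρ := by
      obtain ⟨s, -, hstend, hsmem⟩ := exists_seq_tendsto_sSup hZne hZbd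
      rw [← hρdef] at hstend
      have hct : ContinuousAt t ρ := htc.continuousAt (Ici_mem_nhds hρ2)
      exact ge_of_tendsto (hct.tendsto.comp hstend) (Eventually.of_forall fun k => (hsmem k).2)
    have hneg : ∀ x, ρ < x → x ≤ c → t x < 0 := by
      intro x h1 h2
      by_contra hcon2
      push_neg at hcon2
      have : x ≤ ρ := by rw [hρdef]; exact le_csSup hZbd ⟨⟨by linarith, h2⟩, hcon2⟩
      linarith
    -- the barrier comparison on [ρ, c]
    have hkey : t ρ + (4 / ν ^ 2 * h c * (Real.exp (ν * ρ) / (1 + ρ))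
          + 100 * h c ^ 2 * (Real.exp (ν * ρ) / (1 + ρ) ^ 2)
          + 2 * lamI * (ρ * Real.exp ((ν - 1) * ρ)))
        ≤ t c + (4 / ν ^ 2 * h c * (Real.exp (ν * c) / (1 + c))
          + 100 * h c ^ 2 * (Real.exp (ν * c) / (1 + c) ^ 2)
          + 2 * lamI * (c * Real.exp ((ν - 1) * c))) := by
      have hcontG : ContinuousOn (fun y => t y + (4 / ν ^ 2 * h c * (Real.exp (ν * y) / (1 + y))
          + 100 * h c ^ 2 * (Real.exp (ν * y) / (1 + y) ^ 2)
          + 2 * lamI * (y * Real.exp ((ν - 1) * y)))) (Icc ρ c) := by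
        have hne : ∀ x ∈ Icc ρ c, (1:ℝ) + x ≠ 0 := by
          intro x hx
          have h1 := hx.1
          intro hc'
          have : x = -1 := by linarith
          linarith
        apply ContinuousOn.add (htc.mono (fun x hx => le_trans (by linarith) hx.1))
        apply ContinuousOn.add
        apply ContinuousOn.add
        · exact continuousOn_const.mul (ContinuousOn.div
            (Real.continuous_exp.comp (continuous_const.mul continuous_id)).continuousOn
            (continuous_const.add continuous_id).continuousOn hne)
        · exact continuousOn_const.mul (ContinuousOn.div
            (Real.continuous_exp.comp (continuous_const.mul continuous_id)).continuousOn
            ((continuous_const.add continuous_id).pow 2).continuousOn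
            (fun x hx => pow_ne_zero 2 (hne x hx)))
        · exact continuousOn_const.mul (continuous_id.mul
            (Real.continuous_exp.comp (continuous_const.mul continuous_id))).continuousOn
      apply mono_of_deriv hρc hcontG
        (f' := fun x => t' x + (4 / ν ^ 2 * h c *
            ((ν * Real.exp (ν * x) * (1 + x) - Real.exp (ν * x)) / (1 + x) ^ 2)
          + 100 * h c ^ 2 * ((ν * Real.exp (ν * x) * (1 + x) ^ 2
              - Real.exp (ν * x) * (2 * (1 + x))) / ((1 + x) ^ 2) ^ 2)
          + 2 * lamI * (Real.exp ((ν - 1) * x) + x * ((ν - 1) * Real.exp ((ν - 1) * x)))))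
      · intro x hx
        have hx0 : (0:ℝ) ≤ x := by linarith [hx.1]
        exact (htd x (by linarith [hx.1])).add
          ((((hasDerivAt_expDiv1 ν x hx0).const_mul _).add
            ((hasDerivAt_expDiv2 ν x hx0).const_mul _)).add
            ((hasDerivAt_xexp (ν - 1) x).const_mul _))
      · intro x hx
        have hxr₀ : r₀ ≤ x := by linarith [hx.1]
        have hx800 : 800 ≤ x := by linarith
        have hx3 : (3:ℝ) ≤ x := by linarith
        have hx0 : (0:ℝ) ≤ x := by linarith
        have h1x : (0:ℝ) < 1 + x := by linarith
        have hxE : (0:ℝ) < Real.exp (ν * x) := Real.exp_pos _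
        have hupos : (0:ℝ) < Real.exp (ν * x) / (1 + x) := div_pos hxE h1x
        have hwpos : (0:ℝ) < Real.exp (ν * x) / (1 + x) ^ 2 := div_pos hxE (by positivity)
        have htx_neg : t x < 0 := hneg x hx.1 hx.2.le
        have htx_low : -(10 * h x * (Real.exp (ν * x) / (1 + x))) < t x := hmin x hxr₀ hx.2
        have hhxc : h x ≤ h c := hmono (mem_Ici.2 hx0) (mem_Ici.2 hc0) hx.2.le
        have hhx_pos : 0 < h x := hpos x hx0
        -- bound on g
        have hgb : -(2 / ν * h c * (Real.exp (ν * x) / (1 + x))) ≤ g x := by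
          have hgx := hg x hxr₀
          have c1 : |g x| ≤ 2 / ν * h c * (Real.exp (ν * x) / (1 + x)) := by
            calc |g x| ≤ 2 / ν * (h x / (1 + x)) * Real.exp (ν * x) := hgx
              _ = 2 / ν * h x * (Real.exp (ν * x) / (1 + x)) := by ring
              _ ≤ 2 / ν * h c * (Real.exp (ν * x) / (1 + x)) := by
                  apply mul_le_mul_of_nonneg_right _ hupos.le
                  exact mul_le_mul_of_nonneg_left hhxc (div_nonneg (by norm_num) hνpos.le)
          linarith only [neg_abs_le (g x), c1]
        -- bound on the quadratic term
        have hquad : ν / 2 * t x ^ 2 * Real.exp (-ν * x)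
            ≤ 50 * ν * h c ^ 2 * (Real.exp (ν * x) / (1 + x) ^ 2) := by
          have habs : t x ^ 2 ≤ (10 * h c * (Real.exp (ν * x) / (1 + x))) ^ 2 := by
            have hmm : 10 * h x * (Real.exp (ν * x) / (1 + x))
                ≤ 10 * h c * (Real.exp (ν * x) / (1 + x)) := by
              apply mul_le_mul_of_nonneg_right _ hupos.le
              exact mul_le_mul_of_nonneg_left hhxc (by norm_num)
            have hb1 : -(10 * h c * (Real.exp (ν * x) / (1 + x))) ≤ t x := by
              linarith only [htx_low, hmm]
            have hb2 : t x ≤ 10 * h c * (Real.exp (ν * x) / (1 + x)) := by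
              linarith only [htx_neg, mul_pos hhc hupos]
            exact sq_le_sq' hb1 hb2
          have step : ν / 2 * t x ^ 2 * Real.exp (-ν * x)
              ≤ ν / 2 * (10 * h c * (Real.exp (ν * x) / (1 + x))) ^ 2 * Real.exp (-ν * x) := by
            apply mul_le_mul_of_nonneg_right _ (Real.exp_pos _).le
            exact mul_le_mul_of_nonneg_left habs (by linarith)
          refine le_trans step (le_of_eq ?_)
          rw [show (-ν) * x = -(ν * x) by ring, Real.exp_neg]
          field_simp
          ring
        -- lower bound for the integral in the lambda term
        have hI : x ≤ ∫ y in (2:ℝ)..x, 2 * (1 + t y * Real.exp (-ν * y)) := by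
          have hx2' : (2:ℝ) ≤ x := by linarith
          have hInt1 : IntervalIntegrable (fun y => 2 - 20 / y - 20 * y ^ (-((9:ℝ)/10)))
              MeasureTheory.volume 2 x := by
            apply ContinuousOn.intervalIntegrable
            rw [uIcc_of_le hx2']
            apply ContinuousOn.sub
            apply ContinuousOn.sub continuousOn_const
            · exact continuousOn_const.div continuousOn_id
                (fun y hy => by
                  have := hy.1
                  exact ne_of_gt (by linarith : (0:ℝ) < y))
            · exact continuousOn_const.mul (continuousOn_id.rpow_const
                (fun y hy => Or.inl (by
                  have := hy.1
                  exact ne_of_gt (by linarith : (0:ℝ) < y))))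
          have hInt2 : IntervalIntegrable (fun y => 2 * (1 + t y * Real.exp (-ν * y)))
              MeasureTheory.volume 2 x := by
            apply ContinuousOn.intervalIntegrable
            rw [uIcc_of_le hx2']
            exact continuousOn_const.mul (continuousOn_const.add
              ((htc.mono Icc_subset_Ici_self).mul
                (Real.continuous_exp.comp (continuous_const.mul continuous_id)).continuousOn))
          have hmono_int : (∫ y in (2:ℝ)..x, (2 - 20 / y - 20 * y ^ (-((9:ℝ)/10))))
              ≤ ∫ y in (2:ℝ)..x, 2 * (1 + t y * Real.exp (-ν * y)) := by
            apply intervalIntegral.integral_mono_on hx2' hInt1 hInt2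
            intro y hy
            beta_reduce
            have hy0 : (0:ℝ) < y := by linarith [hy.1]
            have h1y : (0:ℝ) < 1 + y := by linarith
            have hy20 : (0:ℝ) ≤ 20 / y := div_nonneg (by norm_num) hy0.le
            have hy9 : (0:ℝ) ≤ 20 * y ^ (-((9:ℝ)/10)) :=
              mul_nonneg (by norm_num) (Real.rpow_nonneg hy0.le _)
            rcases le_or_gt y r₀ with hyr | hyr
            · have ht0' : 0 ≤ t y := htpos y hy.1 hyr
              have e1 : (0:ℝ) < Real.exp (-ν * y) := Real.exp_pos _
              linarith only [mul_nonneg ht0' e1.le, hy20, hy9]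
            · have hty := hmin y hyr.le (lt_of_le_of_lt hy.2 hx.2)
              have step1 : -(10 * h y / (1 + y)) ≤ t y * Real.exp (-ν * y) := by
                have hmul := mul_le_mul_of_nonneg_right hty.le (Real.exp_pos ((-ν) * y)).le
                have heq : -(10 * h y * (Real.exp (ν * y) / (1 + y))) * Real.exp ((-ν) * y)
                    = -(10 * h y / (1 + y)) := by
                  rw [show (-ν) * y = -(ν * y) by ring, Real.exp_neg]
                  field_simp
                rw [heq] at hmul
                linarith only [hmul]
              have step2 : 10 * h y / (1 + y) ≤ 10 / y + 10 * y ^ (-((9:ℝ)/10)) := by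
                have hgy := hgrow y hy0.le
                have hyp : (0:ℝ) ≤ y ^ ((1:ℝ)/10) := Real.rpow_nonneg hy0.le _
                have k0 : 10 * h y / (1 + y) ≤ 10 * (1 + y ^ ((1:ℝ)/10)) / (1 + y) := by
                  rw [div_le_div_iff₀ h1y h1y]
                  linarith only [mul_le_mul_of_nonneg_right hgy h1y.le]
                have k1 : 10 * (1 + y ^ ((1:ℝ)/10)) / (1 + y)
                    ≤ 10 / y + 10 * (y ^ ((1:ℝ)/10) / y) := by
                  have hrhs : 10 / y + 10 * (y ^ ((1:ℝ)/10) / y)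
                      = (10 + 10 * y ^ ((1:ℝ)/10)) / y := by
                    field_simp
                  rw [hrhs, div_le_div_iff₀ h1y hy0]
                  linarith only [hyp]
                have k2 : y ^ ((1:ℝ)/10) / y = y ^ (-((9:ℝ)/10)) := by
                  rw [show (-((9:ℝ)/10)) = (1:ℝ)/10 - 1 by norm_num, Real.rpow_sub hy0,
                    Real.rpow_one]
                rw [k2] at k1
                linarith only [k0, k1]
              have hty' : -(10 / y + 10 * y ^ (-((9:ℝ)/10))) ≤ t y * Real.exp (-ν * y) := by
                linarith only [step1, step2]
              calc 2 - 20 / y - 20 * y ^ (-((9:ℝ)/10))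
                  ≤ 2 + 2 * (t y * Real.exp (-ν * y)) := by
                    have ediv : (20:ℝ) / y = 2 * (10 / y) := by ring
                    linarith only [hty', ediv]
                _ = 2 * (1 + t y * Real.exp (-ν * y)) := by ring
          have hFTC : (∫ y in (2:ℝ)..x, (2 - 20 / y - 20 * y ^ (-((9:ℝ)/10))))
              = (2 * (x - 2) - 20 * Real.log x - 200 * x ^ ((1:ℝ)/10))
                - (2 * ((2:ℝ) - 2) - 20 * Real.log 2 - 200 * (2:ℝ) ^ ((1:ℝ)/10)) := by
            apply intervalIntegral.integral_eq_sub_of_hasDerivAt _ hInt1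
            intro y hy
            rw [uIcc_of_le hx2'] at hy
            have hy0 : (0:ℝ) < y := by linarith [hy.1]
            have l1 : HasDerivAt (fun z : ℝ => 2 * (z - 2)) 2 y := by
              simpa using ((hasDerivAt_id y).sub_const 2).const_mul 2
            have l2 : HasDerivAt (fun z : ℝ => 20 * Real.log z) (20 * (1 / y)) y := by
              simpa [one_div] using (Real.hasDerivAt_log hy0.ne').const_mul 20
            have l3 : HasDerivAt (fun z : ℝ => 200 * z ^ ((1:ℝ)/10))
                (200 * ((1:ℝ)/10 * y ^ ((1:ℝ)/10 - 1))) y :=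
              (Real.hasDerivAt_rpow_const (Or.inl hy0.ne')).const_mul 200
            have l4 := (l1.sub l2).sub l3
            convert l4 using 1
            · ext z; rfl
            rw [show ((1:ℝ)/10 - 1) = -((9:ℝ)/10) by norm_num]
            ring
          obtain ⟨hA, -⟩ := hr₁spec x (by linarith : r₁ ≤ x)
          obtain ⟨p1, p2⟩ := point_facts hx800 hA
          have hlog2 : 0 ≤ Real.log 2 := Real.log_nonneg one_le_two
          have h2p : (0:ℝ) ≤ (2:ℝ) ^ ((1:ℝ)/10) := Real.rpow_nonneg (by norm_num) _
          linarith only [hFTC.le, hFTC.ge, hmono_int, p1, p2, hlog2, h2p, hx800]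
        -- bound on the lambda term
        have hlamb : 2 * lamI / ν * Real.exp (ν * x) /
            Real.exp (∫ y in (2:ℝ)..x, 2 * (1 + t y * Real.exp (-ν * y)))
            ≤ 2 * lamI * Real.exp ((ν - 1) * x) := by
          have he1 : Real.exp x ≤ Real.exp (∫ y in (2:ℝ)..x, 2 * (1 + t y * Real.exp (-ν * y))) :=
            Real.exp_le_exp.2 hI
          have hnum : (0:ℝ) ≤ 2 * lamI / ν * Real.exp (ν * x) :=
            mul_nonneg (div_nonneg (by linarith) hνpos.le) (Real.exp_pos _).le
          calc 2 * lamI / ν * Real.exp (ν * x) /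
              Real.exp (∫ y in (2:ℝ)..x, 2 * (1 + t y * Real.exp (-ν * y)))
              ≤ 2 * lamI / ν * Real.exp (ν * x) / Real.exp x :=
                div_le_div_of_nonneg_left hnum (Real.exp_pos x) he1
            _ ≤ 2 * lamI * Real.exp (ν * x) / Real.exp x := by
                apply (div_le_div_iff_of_pos_right (Real.exp_pos x)).2
                apply mul_le_mul_of_nonneg_right _ (Real.exp_pos (ν * x)).le
                rw [div_le_iff₀ hνpos]
                linarith only [mul_nonneg hlam (show (0:ℝ) ≤ ν - 1 by linarith [hν])]
            _ = 2 * lamI * Real.exp ((ν - 1) * x) := by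
                rw [mul_div_assoc, ← Real.exp_sub]
                ring_nf
        -- derivative lower bounds for the barrier pieces
        have hode' := hode x hxr₀
        obtain ⟨E2, hE2⟩ : ∃ v : ℝ, v = Real.exp
            (∫ y in (2:ℝ)..x, 2 * (1 + t y * Real.exp (-ν * y))) := ⟨_, rfl⟩
        rw [← hE2] at hode' hlamb
        have hd1 := deriv1_lower hν hx3
        have hd2 := deriv2_lower hν hx3
        have hd3 : Real.exp ((ν - 1) * x)
            ≤ Real.exp ((ν - 1) * x) + x * ((ν - 1) * Real.exp ((ν - 1) * x)) := by
          have hprod : 0 ≤ x * ((ν - 1) * Real.exp ((ν - 1) * x)) :=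
            mul_nonneg hx0 (mul_nonneg (by linarith [hν]) (Real.exp_pos _).le)
          linarith only [hprod]
        have e1 : 4 / ν ^ 2 * h c * (ν / 2 * (Real.exp (ν * x) / (1 + x)))
            = 2 / ν * h c * (Real.exp (ν * x) / (1 + x)) := by
          field_simp
          ring
        have e2 : 100 * h c ^ 2 * (ν / 2 * (Real.exp (ν * x) / (1 + x) ^ 2))
            = 50 * ν * h c ^ 2 * (Real.exp (ν * x) / (1 + x) ^ 2) := by ring
        have c1nn : (0:ℝ) ≤ 4 / ν ^ 2 * h c :=
          mul_nonneg (div_nonneg (by norm_num) hν2pos.le) hhc.le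
        have c2nn : (0:ℝ) ≤ 100 * h c ^ 2 := mul_nonneg (by norm_num) (sq_nonneg (h c))
        have c3nn : (0:ℝ) ≤ 2 * lamI := by linarith only [hlam]
        have m1 := mul_le_mul_of_nonneg_left hd1 c1nn
        have m2 := mul_le_mul_of_nonneg_left hd2 c2nn
        have m3 := mul_le_mul_of_nonneg_left hd3 c3nn
        linarith only [hode', hgb, hquad, hlamb, m1, m2, m3, e1.le, e1.ge, e2.le, e2.ge]
    -- conclude the contradiction
    have hVρ : 0 ≤ 4 / ν ^ 2 * h c * (Real.exp (ν * ρ) / (1 + ρ))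
        + 100 * h c ^ 2 * (Real.exp (ν * ρ) / (1 + ρ) ^ 2)
        + 2 * lamI * (ρ * Real.exp ((ν - 1) * ρ)) := by
      have hρ1 : (0:ℝ) < 1 + ρ := by linarith
      have q1 : (0:ℝ) ≤ 4 / ν ^ 2 * h c * (Real.exp (ν * ρ) / (1 + ρ)) :=
        mul_nonneg (mul_nonneg (div_nonneg (by norm_num) hν2pos.le) hhc.le)
          (div_nonneg (Real.exp_pos _).le hρ1.le)
      have q2 : (0:ℝ) ≤ 100 * h c ^ 2 * (Real.exp (ν * ρ) / (1 + ρ) ^ 2) :=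
        mul_nonneg (mul_nonneg (by norm_num) (sq_nonneg _))
          (div_nonneg (Real.exp_pos _).le (by positivity))
      have q3 : (0:ℝ) ≤ 2 * lamI * (ρ * Real.exp ((ν - 1) * ρ)) :=
        mul_nonneg (by linarith) (mul_nonneg hρ0nn (Real.exp_pos _).le)
      linarith
    obtain ⟨hAc, hBc⟩ := hr₁spec c (by linarith : r₁ ≤ c)
    obtain ⟨pc1, -⟩ := point_facts hc800 hAc
    have hcgrow : 100 * h c ≤ 1 + c := by
      have := hgrow c hc0
      linarith
    have b1 : 4 / ν ^ 2 * h c * (Real.exp (ν * c) / (1 + c))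
        ≤ 4 * (h c * (Real.exp (ν * c) / (1 + c))) := by
      have h44 : 4 / ν ^ 2 ≤ 4 := by
        rw [div_le_iff₀ hν2pos]
        nlinarith only [hν, hνpos]
      linarith only [mul_le_mul_of_nonneg_right h44 hφc.le]
    have b2 : 100 * h c ^ 2 * (Real.exp (ν * c) / (1 + c) ^ 2)
        ≤ h c * (Real.exp (ν * c) / (1 + c)) := by
      have heq2 : 100 * h c ^ 2 * (Real.exp (ν * c) / (1 + c) ^ 2)
          = (100 * h c / (1 + c)) * (h c * (Real.exp (ν * c) / (1 + c))) := by
        field_simp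
      have hle1 : 100 * h c / (1 + c) ≤ 1 := (div_le_one hc1).2 hcgrow
      rw [heq2]
      linarith only [mul_le_mul_of_nonneg_right hle1 hφc.le]
    have b3 : 2 * lamI * (c * Real.exp ((ν - 1) * c)) ≤ h c * (Real.exp (ν * c) / (1 + c)) := by
      have hh0c : h 0 ≤ h c := hmono (mem_Ici.2 le_rfl) (mem_Ici.2 hc0) hc0
      have hexp : Real.exp ((ν - 1) * c) = Real.exp (ν * c) / Real.exp c := by
        rw [← Real.exp_sub]
        ring_nf
      rw [hexp]
      have heq3 : 2 * lamI * (c * (Real.exp (ν * c) / Real.exp c))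
          = 2 * lamI * c * Real.exp (ν * c) / Real.exp c := by ring
      have heq4 : h c * (Real.exp (ν * c) / (1 + c)) = h c * Real.exp (ν * c) / (1 + c) := by
        ring
      rw [heq3, heq4, div_le_div_iff₀ (Real.exp_pos c) hc1]
      have step := mul_le_mul_of_nonneg_right
        (le_trans hBc (mul_le_mul_of_nonneg_right hh0c (Real.exp_pos c).le)) hcE.le
      linarith only [step]
    linarith only [hkey, hVρ, hρ0, hctle, hφc, b1, b2, b3]
  ---------------------------------------------------------------- conclusion
  intro r hr
  have hhr : 0 < h r := hpos r (by linarith)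
  have h1r : (0:ℝ) < 1 + r := by linarith
  have hur : (0:ℝ) < Real.exp (ν * r) / (1 + r) := div_pos (Real.exp_pos _) h1r
  have heq : 10 * (h r / (1 + r)) * Real.exp (ν * r)
      = 10 * (h r * (Real.exp (ν * r) / (1 + r))) := by ring
  have h1 := hup r hr
  have h2 := hlow r hr
  have hX : 0 < h r * (Real.exp (ν * r) / (1 + r)) := mul_pos hhr hur
  rw [abs_le]
  constructor
  · rw [heq]
    linarith only [h2, ht0, hX]
  · rw [heq]
    have h44 : 4 / ν ^ 2 ≤ 4 := by
      rw [div_le_iff₀ hν2pos]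
      nlinarith only [hν, hνpos]
    have hb : 4 / ν ^ 2 * h r * (Real.exp (ν * r) / (1 + r))
        ≤ 4 * (h r * (Real.exp (ν * r) / (1 + r))) := by
      linarith only [mul_le_mul_of_nonneg_right h44 hX.le]
    linarith only [h1, hb, hX]
end

section
/- The Bessel-series solution and its square-integrability near 0: Let ν > 1 and λ > 0. The series u(r) = √r · Σ_{m=0}^{∞} ((−1)^m / (Γ(m+1) Γ(ν+m+1))) (√λ · r / 2)^{2m+ν} converges for every r > 0, the resulting function u : (0,∞) → ℝ is twice differentiable and satisfies −u''(r) + ((ν² − 1/4)/r²) u(r) = λ u(r) for all r > 0, and u restricted to (0,1) is square-integrable, i.e. ∫₀¹ u(r)² dr < ∞. -/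
open Set MeasureTheory

noncomputable def bc (ν : ℝ) (m : ℕ) : ℝ :=
  (-1 : ℝ) ^ m / (Real.Gamma ((m : ℝ) + 1) * Real.Gamma (ν + (m : ℝ) + 1))

lemma gamma_m_pos (m : ℕ) : 0 < Real.Gamma ((m : ℝ) + 1) :=
  Real.Gamma_pos_of_pos (by positivity)

lemma gamma_nu_pos {ν : ℝ} (hν : 1 < ν) (m : ℕ) : 0 < Real.Gamma (ν + (m : ℝ) + 1) :=
  Real.Gamma_pos_of_pos (by positivity)

lemma gamma_nu_ge {ν : ℝ} (hν : 1 < ν) (m : ℕ) :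
    Real.Gamma (ν + 1) ≤ Real.Gamma (ν + (m : ℝ) + 1) := by
  induction m with
  | zero => simp
  | succ n ih =>
      have h1 : ν + ((n : ℝ) + 1) + 1 = (ν + n + 1) + 1 := by ring
      have h2 : Real.Gamma ((ν + n + 1) + 1) = (ν + n + 1) * Real.Gamma (ν + n + 1) :=
        Real.Gamma_add_one (by positivity)
      push_cast
      rw [h1, h2]
      calc Real.Gamma (ν + 1) ≤ Real.Gamma (ν + n + 1) := ih
        _ ≤ (ν + n + 1) * Real.Gamma (ν + n + 1) := by
            nlinarith [gamma_nu_pos hν n, (Nat.cast_nonneg n : (0:ℝ) ≤ n)]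

lemma bc_abs_le {ν : ℝ} (hν : 1 < ν) (m : ℕ) :
    |bc ν m| ≤ 1 / (m.factorial * Real.Gamma (ν + 1)) := by
  have hg1 := gamma_m_pos m
  have hg2 := gamma_nu_pos hν m
  have hfac : Real.Gamma ((m : ℝ) + 1) = m.factorial :=
    Real.Gamma_nat_eq_factorial m
  have hge := gamma_nu_ge hν m
  have hgp : 0 < Real.Gamma (ν + 1) := Real.Gamma_pos_of_pos (by positivity)
  have : |bc ν m| = 1 / (m.factorial * Real.Gamma (ν + (m : ℝ) + 1)) := by
    rw [bc, abs_div, abs_pow, abs_neg, abs_one, one_pow, abs_of_pos (by positivity), hfac]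
  rw [this]
  have hfp : (0:ℝ) < m.factorial := by exact_mod_cast m.factorial_pos
  gcongr


lemma bc_master_summable {ν : ℝ} (hν : 1 < ν) (R : ℝ) (hR : 0 ≤ R) :
    Summable (fun m : ℕ => ((m : ℝ) ^ 2 + 1) * |bc ν m| * R ^ m) := by
  have hgp : 0 < Real.Gamma (ν + 1) := Real.Gamma_pos_of_pos (by positivity)
  have hsum : Summable (fun m : ℕ => (2 / Real.Gamma (ν + 1)) * ((4 * R) ^ m / m.factorial)) :=
    (Real.summable_pow_div_factorial (4 * R)).mul_left _
  refine Summable.of_nonneg_of_le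
    (fun m => mul_nonneg (mul_nonneg (by positivity) (abs_nonneg _)) (pow_nonneg hR m)) ?_ hsum
  · intro m
    have h1 : ((m : ℝ) ^ 2 + 1) ≤ 2 * 4 ^ m := by
      have hm : (m : ℝ) ≤ 2 ^ m := by exact_mod_cast (Nat.lt_two_pow_self (n := m)).le
      have h4 : ((2:ℝ) ^ m) ^ 2 = 4 ^ m := by
        rw [← pow_mul, mul_comm, pow_mul]; norm_num
      have : (m : ℝ) ^ 2 ≤ 4 ^ m := by
        calc (m:ℝ)^2 ≤ ((2:ℝ)^m)^2 := by
              have : (0:ℝ) ≤ (m:ℝ) := Nat.cast_nonneg m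
              nlinarith
          _ = 4 ^ m := h4
      have h1m : (1:ℝ) ≤ 4 ^ m := one_le_pow₀ (by norm_num)
      nlinarith
    have h2 := bc_abs_le hν m
    have hfp : (0:ℝ) < m.factorial := by exact_mod_cast m.factorial_pos
    calc ((m : ℝ) ^ 2 + 1) * |bc ν m| * R ^ m
        ≤ (2 * 4 ^ m) * (1 / (m.factorial * Real.Gamma (ν + 1))) * R ^ m := by
          have := abs_nonneg (bc ν m)
          gcongr
      _ = (2 / Real.Gamma (ν + 1)) * ((4 * R) ^ m / m.factorial) := by
          rw [mul_pow]; field_simp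


lemma bc_rec {ν : ℝ} (hν : 1 < ν) (m : ℕ) :
    ((m : ℝ) + 1) * (ν + (m : ℝ) + 1) * bc ν (m + 1) = -(bc ν m) := by
  have h1 : Real.Gamma (((m:ℝ) + 1) + 1) = ((m:ℝ) + 1) * Real.Gamma ((m:ℝ) + 1) :=
    Real.Gamma_add_one (by positivity)
  have h2 : Real.Gamma ((ν + (m:ℝ) + 1) + 1) = (ν + (m:ℝ) + 1) * Real.Gamma (ν + (m:ℝ) + 1) :=
    Real.Gamma_add_one (by positivity)
  have hg1 := gamma_m_pos m
  have hg2 := gamma_nu_pos hν m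
  simp only [bc, Nat.cast_add, Nat.cast_one, pow_succ]
  have e1 : (m:ℝ) + 1 + 1 = ((m:ℝ) + 1) + 1 := by ring
  have e2 : ν + ((m:ℝ) + 1) + 1 = (ν + (m:ℝ) + 1) + 1 := by ring
  rw [e1, e2, h1, h2]
  field_simp

noncomputable def bg (ν : ℝ) (t : ℝ) : ℝ := ∑' m : ℕ, bc ν m * t ^ m
noncomputable def bg1 (ν : ℝ) (t : ℝ) : ℝ :=
  ∑' m : ℕ, bc ν m * ((m : ℝ) * t ^ (m - 1))
noncomputable def bg2 (ν : ℝ) (t : ℝ) : ℝ :=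
  ∑' m : ℕ, bc ν m * ((m : ℝ) * (((m - 1 : ℕ) : ℝ) * t ^ (m - 2)))

lemma summable_bg {ν : ℝ} (hν : 1 < ν) (t : ℝ) :
    Summable (fun m : ℕ => bc ν m * t ^ m) := by
  refine ((bc_master_summable hν (|t|) (abs_nonneg t)).of_nonneg_of_le ?_ ?_).of_abs
  · intro m; positivity
  · intro m
    rw [abs_mul, abs_pow]
    nlinarith [abs_nonneg (bc ν m), pow_nonneg (abs_nonneg t) m, sq_nonneg (m:ℝ),
      mul_nonneg (mul_nonneg (sq_nonneg (m:ℝ)) (abs_nonneg (bc ν m))) (pow_nonneg (abs_nonneg t) m)]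

lemma term_bound1 {ν : ℝ} (t R : ℝ) (hR1 : 1 ≤ R) (htR : |t| ≤ R) (m : ℕ) :
    |bc ν m * ((m : ℝ) * t ^ (m - 1))| ≤ ((m : ℝ) ^ 2 + 1) * |bc ν m| * R ^ m := by
  have h0 : (0:ℝ) ≤ R := le_trans zero_le_one hR1
  have habs : |t| ^ (m - 1) ≤ R ^ m := by
    calc |t| ^ (m-1) ≤ R ^ (m-1) := pow_le_pow_left₀ (abs_nonneg t) htR _
      _ ≤ R ^ m := pow_le_pow_right₀ hR1 (Nat.sub_le m 1)
  rw [abs_mul, abs_mul, abs_pow, Nat.abs_cast]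
  have hb := abs_nonneg (bc ν m)
  have hm : (m:ℝ) ≤ (m:ℝ)^2 + 1 := by nlinarith [sq_nonneg ((m:ℝ) - 1)]
  have key : (m:ℝ) * |t|^(m-1) ≤ ((m:ℝ)^2+1) * R^m :=
    mul_le_mul hm habs (pow_nonneg (abs_nonneg t) _) (by positivity)
  calc |bc ν m| * ((m:ℝ) * |t| ^ (m-1)) ≤ |bc ν m| * (((m:ℝ)^2+1) * R ^ m) :=
        mul_le_mul_of_nonneg_left key hb
    _ = ((m : ℝ) ^ 2 + 1) * |bc ν m| * R ^ m := by ring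

lemma term_bound2 {ν : ℝ} (t R : ℝ) (hR1 : 1 ≤ R) (htR : |t| ≤ R) (m : ℕ) :
    |bc ν m * ((m : ℝ) * (((m - 1 : ℕ) : ℝ) * t ^ (m - 2)))| ≤
      ((m : ℝ) ^ 2 + 1) * |bc ν m| * R ^ m := by
  have h0 : (0:ℝ) ≤ R := le_trans zero_le_one hR1
  have habs : |t| ^ (m - 2) ≤ R ^ m := by
    calc |t| ^ (m-2) ≤ R ^ (m-2) := pow_le_pow_left₀ (abs_nonneg t) htR _
      _ ≤ R ^ m := pow_le_pow_right₀ hR1 (Nat.sub_le m 2)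
  rw [abs_mul, abs_mul, abs_mul, abs_pow, Nat.abs_cast, Nat.abs_cast]
  have hb := abs_nonneg (bc ν m)
  have hm1 : ((m - 1 : ℕ) : ℝ) ≤ (m : ℝ) := by exact_mod_cast Nat.sub_le m 1
  have hm1n : (0:ℝ) ≤ ((m - 1 : ℕ) : ℝ) := Nat.cast_nonneg _
  have hmn : (0:ℝ) ≤ (m:ℝ) := Nat.cast_nonneg m
  have htp := pow_nonneg (abs_nonneg t) (m-2)
  have hRp := pow_nonneg h0 m
  have hmm : (m:ℝ) * ((m-1:ℕ):ℝ) ≤ (m:ℝ)^2 + 1 := by nlinarith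
  have key : ((m:ℝ) * ((m-1:ℕ):ℝ)) * |t|^(m-2) ≤ ((m:ℝ)^2+1) * R^m :=
    mul_le_mul hmm habs htp (by positivity)
  calc |bc ν m| * ((m:ℝ) * (((m-1:ℕ):ℝ) * |t| ^ (m-2)))
      = |bc ν m| * (((m:ℝ) * ((m-1:ℕ):ℝ)) * |t| ^ (m-2)) := by ring
    _ ≤ |bc ν m| * (((m:ℝ)^2+1) * R ^ m) := mul_le_mul_of_nonneg_left key hb
    _ = ((m : ℝ) ^ 2 + 1) * |bc ν m| * R ^ m := by ring

lemma summable_bg1 {ν : ℝ} (hν : 1 < ν) (t : ℝ) :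
    Summable (fun m : ℕ => bc ν m * ((m : ℝ) * t ^ (m - 1))) := by
  refine ((bc_master_summable hν (|t| + 1) (by positivity)).of_nonneg_of_le ?_ ?_).of_abs
  · intro m; positivity
  · exact term_bound1 t (|t|+1) (by simp [abs_nonneg]) (by linarith) 

lemma summable_bg2 {ν : ℝ} (hν : 1 < ν) (t : ℝ) :
    Summable (fun m : ℕ => bc ν m * ((m : ℝ) * (((m - 1 : ℕ) : ℝ) * t ^ (m - 2)))) := by
  refine ((bc_master_summable hν (|t| + 1) (by positivity)).of_nonneg_of_le ?_ ?_).of_abs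
  · intro m; positivity
  · exact term_bound2 t (|t|+1) (by simp [abs_nonneg]) (by linarith)


lemma bg_hasDerivAt {ν : ℝ} (hν : 1 < ν) (t : ℝ) :
    HasDerivAt (bg ν) (bg1 ν t) t := by
  have hball : t ∈ Metric.ball (0:ℝ) (|t| + 1) := by
    simp [Real.norm_eq_abs]
  have := hasDerivAt_tsum_of_isPreconnected
    (bc_master_summable hν (|t| + 1) (by positivity))
    Metric.isOpen_ball (convex_ball (0:ℝ) (|t|+1)).isPreconnected
    (g := fun m z => bc ν m * z ^ m)
    (g' := fun m z => bc ν m * ((m : ℝ) * z ^ (m - 1)))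
    (fun m y _ => (hasDerivAt_pow m y).const_mul (bc ν m))
    (fun m y hy => by
      have hyR : |y| ≤ |t| + 1 := by
        have := mem_ball_zero_iff.mp hy
        rw [Real.norm_eq_abs] at this; linarith
      rw [Real.norm_eq_abs]
      exact term_bound1 y (|t|+1) (by simp [abs_nonneg]) hyR m)
    hball (summable_bg hν t) hball
  exact this

lemma bg1_hasDerivAt {ν : ℝ} (hν : 1 < ν) (t : ℝ) :
    HasDerivAt (bg1 ν) (bg2 ν t) t := by
  have hball : t ∈ Metric.ball (0:ℝ) (|t| + 1) := by
    simp [Real.norm_eq_abs]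
  have := hasDerivAt_tsum_of_isPreconnected
    (bc_master_summable hν (|t| + 1) (by positivity))
    Metric.isOpen_ball (convex_ball (0:ℝ) (|t|+1)).isPreconnected
    (g := fun m z => bc ν m * ((m : ℝ) * z ^ (m - 1)))
    (g' := fun m z => bc ν m * ((m : ℝ) * (((m - 1 : ℕ) : ℝ) * z ^ (m - 2))))
    (fun m y _ => by
      have h := (hasDerivAt_pow (m - 1) y).const_mul (bc ν m * (m : ℝ))
      have e : m - 1 - 1 = m - 2 := by omega
      rw [e] at h
      simpa [mul_assoc] using h)
    (fun m y hy => by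
      have hyR : |y| ≤ |t| + 1 := by
        have := mem_ball_zero_iff.mp hy
        rw [Real.norm_eq_abs] at this; linarith
      rw [Real.norm_eq_abs]
      exact term_bound2 y (|t|+1) (by simp [abs_nonneg]) hyR m)
    hball (summable_bg1 hν t) hball
  exact this


lemma bg_ode {ν : ℝ} (hν : 1 < ν) (t : ℝ) :
    t * bg2 ν t + (ν + 1) * bg1 ν t + bg ν t = 0 := by
  have hA : ∀ m : ℕ, t * (bc ν m * ((m : ℝ) * (((m - 1 : ℕ) : ℝ) * t ^ (m - 2)))) =
      bc ν m * ((m : ℝ) * (((m - 1 : ℕ) : ℝ) * t ^ (m - 1))) := by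
    intro m
    match m with
    | 0 => simp
    | 1 => simp
    | (n+2) =>
      have e1 : n + 2 - 2 = n := by omega
      have e2 : n + 2 - 1 = n + 1 := by omega
      rw [e1, e2, pow_succ]; ring
  have hsA : Summable (fun m : ℕ => bc ν m * ((m : ℝ) * (((m - 1 : ℕ) : ℝ) * t ^ (m - 1)))) :=
    ((summable_bg2 hν t).mul_left t).congr hA
  have hsB : Summable (fun m : ℕ => (ν + 1) * (bc ν m * ((m : ℝ) * t ^ (m - 1)))) :=
    (summable_bg1 hν t).mul_left (ν + 1)
  have hAB : ∀ m : ℕ, bc ν m * ((m : ℝ) * (((m - 1 : ℕ) : ℝ) * t ^ (m - 1))) +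
      (ν + 1) * (bc ν m * ((m : ℝ) * t ^ (m - 1))) =
      bc ν m * ((m : ℝ) * (((m : ℝ) + ν) * t ^ (m - 1))) := by
    intro m
    match m with
    | 0 => simp
    | (n+1) =>
      have e1 : n + 1 - 1 = n := by omega
      rw [e1]
      push_cast
      ring
  have hsD : Summable (fun m : ℕ => bc ν m * ((m : ℝ) * (((m : ℝ) + ν) * t ^ (m - 1)))) :=
    (hsA.add hsB).congr hAB
  have h2 : t * bg2 ν t = ∑' m : ℕ, bc ν m * ((m : ℝ) * (((m - 1 : ℕ) : ℝ) * t ^ (m - 1))) := by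
    rw [bg2, ← tsum_mul_left]
    exact tsum_congr hA
  have h1 : (ν + 1) * bg1 ν t = ∑' m : ℕ, (ν + 1) * (bc ν m * ((m : ℝ) * t ^ (m - 1))) := by
    rw [bg1, ← tsum_mul_left]
  have hD : ∑' m : ℕ, bc ν m * ((m : ℝ) * (((m : ℝ) + ν) * t ^ (m - 1))) =
      -∑' m : ℕ, bc ν m * t ^ m := by
    rw [hsD.tsum_eq_zero_add]
    simp only [Nat.cast_zero, zero_mul, mul_zero, zero_add]
    rw [← tsum_neg]
    refine tsum_congr fun m => ?_
    have e1 : m + 1 - 1 = m := by omega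
    have hrec := bc_rec hν m
    rw [e1]
    push_cast
    linear_combination t ^ m * hrec
  rw [h2, h1, ← hsA.tsum_add hsB, tsum_congr hAB, hD, bg]
  ring


noncomputable def bu (ν lam : ℝ) : ℝ → ℝ := fun r =>
  (Real.sqrt lam / 2) ^ ν * (r ^ (ν + 1/2) * bg ν (lam/4 * r ^ 2))

noncomputable def bv (ν lam : ℝ) : ℝ → ℝ := fun r =>
  (Real.sqrt lam / 2) ^ ν * ((ν+1/2) * r ^ (ν - 1/2) * bg ν (lam/4 * r^2)
    + 2*(lam/4) * r ^ (ν + 3/2) * bg1 ν (lam/4 * r^2))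

noncomputable def bw (ν lam : ℝ) : ℝ → ℝ := fun r =>
  (Real.sqrt lam / 2) ^ ν * ((ν+1/2)*(ν-1/2) * r ^ (ν - 3/2) * bg ν (lam/4 * r^2)
    + (2*(lam/4)*(2*ν+2)) * r ^ (ν + 1/2) * bg1 ν (lam/4 * r^2)
    + 4*(lam/4)^2 * r ^ (ν + 5/2) * bg2 ν (lam/4 * r^2))

lemma inner_hasDerivAt (lam r : ℝ) :
    HasDerivAt (fun x : ℝ => lam/4 * x ^ 2) (lam/4 * (2 * r)) r := by
  simpa using (hasDerivAt_pow 2 r).const_mul (lam/4)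

lemma bg_comp_hasDerivAt {ν : ℝ} (hν : 1 < ν) (lam r : ℝ) :
    HasDerivAt (fun x : ℝ => bg ν (lam/4 * x ^ 2)) (bg1 ν (lam/4 * r^2) * (lam/4 * (2*r))) r := by
  exact
    HasDerivAt.comp r (bg_hasDerivAt hν (lam/4 * r^2)) (inner_hasDerivAt lam r)

lemma bg1_comp_hasDerivAt {ν : ℝ} (hν : 1 < ν) (lam r : ℝ) :
    HasDerivAt (fun x : ℝ => bg1 ν (lam/4 * x ^ 2)) (bg2 ν (lam/4 * r^2) * (lam/4 * (2*r))) r := by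
  exact
    HasDerivAt.comp r (bg1_hasDerivAt hν (lam/4 * r^2)) (inner_hasDerivAt lam r)

lemma bu_hasDerivAt {ν lam : ℝ} (hν : 1 < ν) {r : ℝ} (hr : 0 < r) :
    HasDerivAt (bu ν lam) (bv ν lam r) r := by
  have h1 : HasDerivAt (fun x : ℝ => x ^ (ν + 1/2)) ((ν + 1/2) * r ^ (ν + 1/2 - 1)) r :=
    Real.hasDerivAt_rpow_const (Or.inl hr.ne')
  have h2 := (h1.mul (bg_comp_hasDerivAt hν lam r)).const_mul ((Real.sqrt lam / 2) ^ ν)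
  have e : (Real.sqrt lam / 2) ^ ν *
      ((ν + 1/2) * r ^ (ν + 1/2 - 1) * bg ν (lam/4 * r^2)
        + r ^ (ν + 1/2) * (bg1 ν (lam/4 * r^2) * (lam/4 * (2*r)))) = bv ν lam r := by
    rw [bv, show ν + 1/2 - 1 = ν - 1/2 by ring,
      show ν + 3/2 = (ν + 1/2) + 1 by ring, Real.rpow_add_one hr.ne']
    ring
  exact e ▸ h2

lemma bv_hasDerivAt {ν lam : ℝ} (hν : 1 < ν) {r : ℝ} (hr : 0 < r) :
    HasDerivAt (bv ν lam) (bw ν lam r) r := by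
  have h1 : HasDerivAt (fun x : ℝ => x ^ (ν - 1/2)) ((ν - 1/2) * r ^ (ν - 1/2 - 1)) r :=
    Real.hasDerivAt_rpow_const (Or.inl hr.ne')
  have h2 : HasDerivAt (fun x : ℝ => x ^ (ν + 3/2)) ((ν + 3/2) * r ^ (ν + 3/2 - 1)) r :=
    Real.hasDerivAt_rpow_const (Or.inl hr.ne')
  have hA := (h1.const_mul (ν + 1/2)).mul (bg_comp_hasDerivAt hν lam r)
  have hB := (h2.const_mul (2*(lam/4))).mul (bg1_comp_hasDerivAt hν lam r)
  have h3 := (hA.add hB).const_mul ((Real.sqrt lam / 2) ^ ν)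
  have q1 : r ^ (ν - 1/2) = r ^ (ν - 3/2) * r := by
    rw [show ν - 1/2 = (ν - 3/2) + 1 by ring, Real.rpow_add_one hr.ne']
  have q2 : r ^ (ν + 1/2) = r ^ (ν - 1/2) * r := by
    rw [show ν + 1/2 = (ν - 1/2) + 1 by ring, Real.rpow_add_one hr.ne']
  have q3 : r ^ (ν + 3/2) = r ^ (ν + 1/2) * r := by
    rw [show ν + 3/2 = (ν + 1/2) + 1 by ring, Real.rpow_add_one hr.ne']
  have q4 : r ^ (ν + 5/2) = r ^ (ν + 3/2) * r := by
    rw [show ν + 5/2 = (ν + 3/2) + 1 by ring, Real.rpow_add_one hr.ne']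
  have e : (Real.sqrt lam / 2) ^ ν *
      ((ν + 1/2) * ((ν - 1/2) * r ^ (ν - 1/2 - 1)) * bg ν (lam/4 * r^2)
        + (ν + 1/2) * r ^ (ν - 1/2) * (bg1 ν (lam/4 * r^2) * (lam/4 * (2*r)))
        + (2*(lam/4) * ((ν + 3/2) * r ^ (ν + 3/2 - 1)) * bg1 ν (lam/4 * r^2)
          + 2*(lam/4) * r ^ (ν + 3/2) * (bg2 ν (lam/4 * r^2) * (lam/4 * (2*r))))) =
      bw ν lam r := by
    rw [bw, show ν - 1/2 - 1 = ν - 3/2 by ring, show ν + 3/2 - 1 = ν + 1/2 by ring,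
      q4, q3, q2, q1]
    ring
  exact e ▸ h3

lemma bu_ode {ν lam : ℝ} (hν : 1 < ν) (hlam : 0 < lam) {r : ℝ} (hr : 0 < r) :
    -(bw ν lam r) + (ν ^ 2 - 1/4) / r ^ 2 * bu ν lam r = lam * bu ν lam r := by
  have hode := bg_ode hν (lam/4 * r^2)
  have q1 : r ^ (ν - 1/2) = r ^ (ν - 3/2) * r := by
    rw [show ν - 1/2 = (ν - 3/2) + 1 by ring, Real.rpow_add_one hr.ne']
  have q2 : r ^ (ν + 1/2) = r ^ (ν - 1/2) * r := by
    rw [show ν + 1/2 = (ν - 1/2) + 1 by ring, Real.rpow_add_one hr.ne']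
  have q3 : r ^ (ν + 3/2) = r ^ (ν + 1/2) * r := by
    rw [show ν + 3/2 = (ν + 1/2) + 1 by ring, Real.rpow_add_one hr.ne']
  have q4 : r ^ (ν + 5/2) = r ^ (ν + 3/2) * r := by
    rw [show ν + 5/2 = (ν + 3/2) + 1 by ring, Real.rpow_add_one hr.ne']
  rw [bw, bu, q4, q3, q2, q1]
  generalize hG2 : bg2 ν (lam/4 * r^2) = G2 at hode ⊢
  generalize hG1 : bg1 ν (lam/4 * r^2) = G1 at hode ⊢
  generalize hG : bg ν (lam/4 * r^2) = G at hode ⊢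
  generalize hP : r ^ (ν - 3/2) = P
  generalize hCC : (Real.sqrt lam / 2) ^ ν = C
  have h2 : (ν^2 - 1/4)/r^2 * (C * (P * r * r * G)) = (ν^2 - 1/4) * (C * (P * G)) := by
    field_simp
  linear_combination (-(lam * C * P * r^2)) * hode + h2


/-- The Bessel-series solution of the Bessel-type Schrödinger equation and its
square-integrability near `0`. -/
theorem stmt8 (ν lam : ℝ) (hν : 1 < ν) (hlam : 0 < lam) :
    (∀ r : ℝ, 0 < r → Summable (fun m : ℕ =>
      (-1 : ℝ) ^ m / (Real.Gamma ((m : ℝ) + 1) * Real.Gamma (ν + (m : ℝ) + 1)) *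
        (Real.sqrt lam * r / 2) ^ (2 * (m : ℝ) + ν))) ∧
    ∃ u : ℝ → ℝ,
      (∀ r : ℝ, 0 < r → u r = Real.sqrt r * ∑' m : ℕ,
        (-1 : ℝ) ^ m / (Real.Gamma ((m : ℝ) + 1) * Real.Gamma (ν + (m : ℝ) + 1)) *
          (Real.sqrt lam * r / 2) ^ (2 * (m : ℝ) + ν)) ∧
      (∀ r : ℝ, 0 < r → DifferentiableAt ℝ u r ∧ DifferentiableAt ℝ (deriv u) r) ∧
      (∀ r : ℝ, 0 < r →
        -(deriv (deriv u) r) + (ν ^ 2 - 1 / 4) / r ^ 2 * u r = lam * u r) ∧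
      IntegrableOn (fun r => (u r) ^ 2) (Ioo 0 1) := by
  have hsl : 0 < Real.sqrt lam := Real.sqrt_pos.mpr hlam
  -- rewriting of the stated general term
  have hterm : ∀ r : ℝ, 0 < r → ∀ m : ℕ,
      (-1 : ℝ) ^ m / (Real.Gamma ((m : ℝ) + 1) * Real.Gamma (ν + (m : ℝ) + 1)) *
        (Real.sqrt lam * r / 2) ^ (2 * (m : ℝ) + ν) =
      ((Real.sqrt lam * r / 2) ^ ν) * (bc ν m * (lam/4 * r ^ 2) ^ m) := by
    intro r hr m
    have hb : (0:ℝ) < Real.sqrt lam * r / 2 := by positivity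
    have h1 : (Real.sqrt lam * r / 2) ^ (2 * (m : ℝ) + ν) =
        (Real.sqrt lam * r / 2) ^ (2 * (m : ℝ)) * (Real.sqrt lam * r / 2) ^ ν :=
      Real.rpow_add hb _ _
    have h2 : (Real.sqrt lam * r / 2) ^ (2 * (m : ℝ)) = (lam/4 * r ^ 2) ^ m := by
      have e : 2 * (m : ℝ) = ((2 * m : ℕ) : ℝ) := by push_cast; ring
      rw [e, Real.rpow_natCast, pow_mul]
      congr 1
      have : Real.sqrt lam ^ 2 = lam := Real.sq_sqrt hlam.le
      field_simp
      nlinarith [this]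
    rw [h1, h2, bc]
    ring
  -- summability of the stated series
  have hsummable : ∀ r : ℝ, 0 < r → Summable (fun m : ℕ =>
      (-1 : ℝ) ^ m / (Real.Gamma ((m : ℝ) + 1) * Real.Gamma (ν + (m : ℝ) + 1)) *
        (Real.sqrt lam * r / 2) ^ (2 * (m : ℝ) + ν)) := by
    intro r hr
    refine (((summable_bg hν (lam/4 * r ^ 2)).mul_left ((Real.sqrt lam * r / 2) ^ ν)).congr ?_)
    intro m
    exact (hterm r hr m).symm
  refine ⟨hsummable, ?_⟩
  -- the solution
  refine ⟨bu ν lam, ?_, ?_, ?_, ?_⟩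
  · -- u equals √r times the series
    intro r hr
    have htsum : (∑' m : ℕ,
        (-1 : ℝ) ^ m / (Real.Gamma ((m : ℝ) + 1) * Real.Gamma (ν + (m : ℝ) + 1)) *
          (Real.sqrt lam * r / 2) ^ (2 * (m : ℝ) + ν)) =
        ((Real.sqrt lam * r / 2) ^ ν) * bg ν (lam/4 * r ^ 2) := by
      rw [bg, ← tsum_mul_left]
      exact tsum_congr (hterm r hr)
    rw [htsum]
    have hbase : Real.sqrt lam * r / 2 = (Real.sqrt lam / 2) * r := by ring
    have h3 : (Real.sqrt lam * r / 2) ^ ν = (Real.sqrt lam / 2) ^ ν * r ^ ν := by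
      rw [hbase, Real.mul_rpow (by positivity) hr.le]
    have h4 : Real.sqrt r * r ^ ν = r ^ (ν + 1/2) := by
      rw [Real.rpow_add hr, Real.sqrt_eq_rpow]
      ring
    show (Real.sqrt lam / 2) ^ ν * (r ^ (ν + 1/2) * bg ν (lam/4 * r ^ 2)) = _
    rw [h3, ← h4]
    ring
  · -- twice differentiable
    intro r hr
    have heq : deriv (bu ν lam) =ᶠ[nhds r] bv ν lam := by
      filter_upwards [isOpen_Ioi.mem_nhds (show r ∈ Ioi (0:ℝ) from hr)] with s hs
      exact (bu_hasDerivAt hν hs).deriv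
    refine ⟨(bu_hasDerivAt hν hr).differentiableAt, ?_⟩
    exact (heq.differentiableAt_iff).mpr (bv_hasDerivAt hν hr).differentiableAt
  · -- the ODE
    intro r hr
    have heq : deriv (bu ν lam) =ᶠ[nhds r] bv ν lam := by
      filter_upwards [isOpen_Ioi.mem_nhds (show r ∈ Ioi (0:ℝ) from hr)] with s hs
      exact (bu_hasDerivAt hν hs).deriv
    have e1 : deriv (deriv (bu ν lam)) r = deriv (bv ν lam) r := heq.deriv_eq
    have e2 : deriv (bv ν lam) r = bw ν lam r := (bv_hasDerivAt hν hr).deriv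
    rw [e1, e2]
    exact bu_ode hν hlam hr
  · -- square integrability
    have hgcont : Continuous (bg ν) :=
      continuous_iff_continuousAt.mpr (fun t => (bg_hasDerivAt hν t).continuousAt)
    have hucont : ContinuousOn (bu ν lam) (Icc 0 1) := by
      intro x _
      have h1 : ContinuousAt (fun r : ℝ => r ^ (ν + 1/2)) x :=
        Real.continuousAt_rpow_const x (ν + 1/2) (Or.inr (by linarith))
      have h2 : ContinuousAt (fun r : ℝ => bg ν (lam/4 * r ^ 2)) x :=
        hgcont.continuousAt.comp ((continuous_const.mul (continuous_pow 2)).continuousAt)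
      exact ((continuousAt_const.mul (h1.mul h2))).continuousWithinAt
    have hint : IntegrableOn (fun r => (bu ν lam r) ^ 2) (Icc 0 1) :=
      ((hucont.pow 2).integrableOn_compact isCompact_Icc)
    exact hint.mono_set Ioo_subset_Icc_self
end

section
/- Uniqueness up to scalar multiple of square-integrable solutions near the singular endpoint 0: Let ν > 1 and λ ∈ ℝ. If u₁, u₂ : (0,1) → ℝ are twice differentiable, each satisfies −u''(r) + ((ν² − 1/4)/r²) u(r) = λ u(r) for all r ∈ (0,1), and each is square-integrable on (0,1), then u₁ and u₂ are linearly dependent, i.e. there exist real constants c₁, c₂, not both zero, with c₁ u₁(r) + c₂ u₂(r) = 0 for all r ∈ (0,1). -/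
open Set MeasureTheory

/-- Properties of a linear combination of two twice-differentiable functions. -/
lemma comb_props {u₁ u₂ : ℝ → ℝ}
    (hd₁ : ∀ r ∈ Ioo (0 : ℝ) 1, DifferentiableAt ℝ u₁ r ∧ DifferentiableAt ℝ (deriv u₁) r)
    (hd₂ : ∀ r ∈ Ioo (0 : ℝ) 1, DifferentiableAt ℝ u₂ r ∧ DifferentiableAt ℝ (deriv u₂) r)
    (c₁ c₂ : ℝ) :
    ∀ r ∈ Ioo (0 : ℝ) 1,
      DifferentiableAt ℝ (fun s => c₁ * u₁ s + c₂ * u₂ s) r ∧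
      deriv (fun s => c₁ * u₁ s + c₂ * u₂ s) r = c₁ * deriv u₁ r + c₂ * deriv u₂ r ∧
      DifferentiableAt ℝ (deriv (fun s => c₁ * u₁ s + c₂ * u₂ s)) r ∧
      deriv (deriv (fun s => c₁ * u₁ s + c₂ * u₂ s)) r
        = c₁ * deriv (deriv u₁) r + c₂ * deriv (deriv u₂) r := by
  have hder : ∀ r ∈ Ioo (0 : ℝ) 1,
      HasDerivAt (fun s => c₁ * u₁ s + c₂ * u₂ s) (c₁ * deriv u₁ r + c₂ * deriv u₂ r) r :=
    fun r hr => (((hd₁ r hr).1.hasDerivAt.const_mul c₁).add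
      ((hd₂ r hr).1.hasDerivAt.const_mul c₂))
  intro r hr
  have hev : deriv (fun s => c₁ * u₁ s + c₂ * u₂ s)
      =ᶠ[nhds r] (fun s => c₁ * deriv u₁ s + c₂ * deriv u₂ s) := by
    filter_upwards [isOpen_Ioo.mem_nhds hr] with s hs
    exact (hder s hs).deriv
  have hD2 : HasDerivAt (fun s => c₁ * deriv u₁ s + c₂ * deriv u₂ s)
      (c₁ * deriv (deriv u₁) r + c₂ * deriv (deriv u₂) r) r :=
    (((hd₁ r hr).2.hasDerivAt.const_mul c₁).add ((hd₂ r hr).2.hasDerivAt.const_mul c₂))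
  refine ⟨(hder r hr).differentiableAt, (hder r hr).deriv, ?_, ?_⟩
  · exact (hev.differentiableAt_iff).2 hD2.differentiableAt
  · rw [hev.deriv_eq]; exact hD2.deriv
open Set MeasureTheory

lemma wronskian_const {q u₁ u₂ : ℝ → ℝ}
    (hd₁ : ∀ r ∈ Ioo (0 : ℝ) 1, DifferentiableAt ℝ u₁ r ∧ DifferentiableAt ℝ (deriv u₁) r)
    (hd₂ : ∀ r ∈ Ioo (0 : ℝ) 1, DifferentiableAt ℝ u₂ r ∧ DifferentiableAt ℝ (deriv u₂) r)
    (he₁ : ∀ r ∈ Ioo (0:ℝ) 1, deriv (deriv u₁) r = q r * u₁ r)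
    (he₂ : ∀ r ∈ Ioo (0:ℝ) 1, deriv (deriv u₂) r = q r * u₂ r) :
    ∀ r ∈ Ioo (0:ℝ) 1, ∀ r' ∈ Ioo (0:ℝ) 1,
      u₁ r * deriv u₂ r - deriv u₁ r * u₂ r
        = u₁ r' * deriv u₂ r' - deriv u₁ r' * u₂ r' := by
  set W : ℝ → ℝ := fun s => u₁ s * deriv u₂ s - deriv u₁ s * u₂ s with hW
  have hder : ∀ r ∈ Ioo (0:ℝ) 1, HasDerivAt W 0 r := by
    intro r hr
    have h := ((hd₁ r hr).1.hasDerivAt.mul (hd₂ r hr).2.hasDerivAt).sub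
      ((hd₁ r hr).2.hasDerivAt.mul (hd₂ r hr).1.hasDerivAt)
    have : deriv u₁ r * deriv u₂ r + u₁ r * deriv (deriv u₂) r -
        (deriv (deriv u₁) r * u₂ r + deriv u₁ r * deriv u₂ r) = 0 := by
      rw [he₁ r hr, he₂ r hr]; ring
    rwa [this] at h
  have hcont : ContinuousOn W (Ioo (0:ℝ) 1) := fun r hr =>
    ((hder r hr).differentiableAt.continuousAt).continuousWithinAt
  have hdiff : DifferentiableOn ℝ W (interior (Ioo (0:ℝ) 1)) := by
    rw [interior_Ioo]; exact fun r hr => (hder r hr).differentiableAt.differentiableWithinAt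
  have hzero : ∀ x ∈ interior (Ioo (0:ℝ) 1), deriv W x = 0 := by
    rw [interior_Ioo]; exact fun r hr => (hder r hr).deriv
  have hmono := monotoneOn_of_deriv_nonneg (convex_Ioo (0:ℝ) 1) hcont hdiff
    (fun x hx => le_of_eq (hzero x hx).symm)
  have hanti := antitoneOn_of_deriv_nonpos (convex_Ioo (0:ℝ) 1) hcont hdiff
    (fun x hx => le_of_eq (hzero x hx))
  intro r hr r' hr'
  rcases le_total r r' with h | h
  · exact le_antisymm (hmono hr hr' h) (hanti hr hr' h)
  · exact le_antisymm (hanti hr' hr h) (hmono hr' hr h)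
open Set MeasureTheory

lemma ode_zero {q v : ℝ → ℝ}
    (hqc : ContinuousOn q (Ioo (0:ℝ) 1))
    (hd : ∀ r ∈ Ioo (0:ℝ) 1, DifferentiableAt ℝ v r ∧ DifferentiableAt ℝ (deriv v) r)
    (heq : ∀ r ∈ Ioo (0:ℝ) 1, deriv (deriv v) r = q r * v r)
    {r₀ : ℝ} (hr₀ : r₀ ∈ Ioo (0:ℝ) 1) (h0 : v r₀ = 0) (h0' : deriv v r₀ = 0) :
    ∀ r ∈ Ioo (0:ℝ) 1, v r = 0 := by
  intro r hr
  set s := min r r₀ with hs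
  set t := max r r₀ with ht
  have hsub : Icc s t ⊆ Ioo (0:ℝ) 1 := fun x hx =>
    ⟨lt_of_lt_of_le (lt_min hr.1 hr₀.1) hx.1, lt_of_le_of_lt hx.2 (max_lt hr.2 hr₀.2)⟩
  have hst : s ≤ t := min_le_max
  set E : ℝ → ℝ := fun x => v x * v x + deriv v x * deriv v x with hE
  have hEnonneg : ∀ x, 0 ≤ E x := fun x => add_nonneg (mul_self_nonneg _) (mul_self_nonneg _)
  have hEder : ∀ x ∈ Ioo (0:ℝ) 1,
      HasDerivAt E (2 * (1 + q x) * (v x * deriv v x)) x := by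
    intro x hx
    have h := ((hd x hx).1.hasDerivAt.mul (hd x hx).1.hasDerivAt).add
      ((hd x hx).2.hasDerivAt.mul (hd x hx).2.hasDerivAt)
    have e : deriv v x * v x + v x * deriv v x +
        (deriv (deriv v) x * deriv v x + deriv v x * deriv (deriv v) x)
        = 2 * (1 + q x) * (v x * deriv v x) := by
      rw [heq x hx]; ring
    rwa [e] at h
  -- bound on the coefficient
  obtain ⟨K, hK⟩ := (isCompact_Icc (a := s) (b := t)).exists_bound_of_continuousOn
    (f := fun x => 2 * (1 + q x))
    (by exact (continuousOn_const.mul (continuousOn_const.add (hqc.mono hsub))))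
  have hK0 : 0 ≤ K := le_trans (norm_nonneg _) (hK s (left_mem_Icc.2 hst))
  have hbound : ∀ x ∈ Icc s t, |2 * (1 + q x) * (v x * deriv v x)| ≤ K * E x := by
    intro x hx
    have h1 : |2 * (1 + q x)| ≤ K := hK x hx
    have h2 : |v x * deriv v x| ≤ E x := by
      have hEx : E x = v x * v x + deriv v x * deriv v x := rfl
      rw [hEx, abs_mul]
      nlinarith [abs_nonneg (v x), abs_nonneg (deriv v x), abs_mul_abs_self (v x),
        abs_mul_abs_self (deriv v x), sq_nonneg (|v x| - |deriv v x|)]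
    calc |2 * (1 + q x) * (v x * deriv v x)| = |2 * (1 + q x)| * |v x * deriv v x| :=
          abs_mul _ _
      _ ≤ K * E x := mul_le_mul h1 h2 (abs_nonneg _) hK0
  -- the two auxiliary functions
  have hFanti : AntitoneOn (fun x => E x * Real.exp (-K * x)) (Icc s t) := by
    apply antitoneOn_of_deriv_nonpos (convex_Icc s t)
    · exact ContinuousOn.mul
        (fun x hx => ((hEder x (hsub hx)).differentiableAt.continuousAt).continuousWithinAt)
        (Real.continuous_exp.comp (continuous_const.mul continuous_id)).continuousOn
    · intro x hx
      rw [interior_Icc] at hx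
      have hlin : HasDerivAt (fun y : ℝ => -K * y) (-K) x := by
        simpa using (hasDerivAt_id x).const_mul (-K)
      exact (((hEder x (hsub (Ioo_subset_Icc_self hx))).mul
        hlin.exp).differentiableAt).differentiableWithinAt
    · intro x hx
      rw [interior_Icc] at hx
      have hx' := hsub (Ioo_subset_Icc_self hx)
      have hlin : HasDerivAt (fun y : ℝ => -K * y) (-K) x := by
        simpa using (hasDerivAt_id x).const_mul (-K)
      have hD : HasDerivAt (fun x => E x * Real.exp (-K * x)) _ x := (hEder x hx').mul hlin.exp
      rw [hD.deriv]
      have hb := hbound x (Ioo_subset_Icc_self hx)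
      have he : (0:ℝ) < Real.exp (-K * x) := Real.exp_pos _
      have hle : 2 * (1 + q x) * (v x * deriv v x) ≤ K * E x :=
        le_trans (le_abs_self _) hb
      calc 2 * (1 + q x) * (v x * deriv v x) * Real.exp (-K * x) +
            E x * (Real.exp (-K * x) * -K)
          = (2 * (1 + q x) * (v x * deriv v x) - K * E x) * Real.exp (-K * x) := by ring
        _ ≤ 0 := mul_nonpos_of_nonpos_of_nonneg (by linarith) he.le
  have hGmono : MonotoneOn (fun x => E x * Real.exp (K * x)) (Icc s t) := by
    apply monotoneOn_of_deriv_nonneg (convex_Icc s t)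
    · exact ContinuousOn.mul
        (fun x hx => ((hEder x (hsub hx)).differentiableAt.continuousAt).continuousWithinAt)
        (Real.continuous_exp.comp (continuous_const.mul continuous_id)).continuousOn
    · intro x hx
      rw [interior_Icc] at hx
      have hlin : HasDerivAt (fun y : ℝ => K * y) K x := by
        simpa using (hasDerivAt_id x).const_mul K
      exact (((hEder x (hsub (Ioo_subset_Icc_self hx))).mul
        hlin.exp).differentiableAt).differentiableWithinAt
    · intro x hx
      rw [interior_Icc] at hx
      have hx' := hsub (Ioo_subset_Icc_self hx)
      have hlin : HasDerivAt (fun y : ℝ => K * y) K x := by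
        simpa using (hasDerivAt_id x).const_mul K
      have hD : HasDerivAt (fun x => E x * Real.exp (K * x)) _ x := (hEder x hx').mul hlin.exp
      rw [hD.deriv]
      have hb := hbound x (Ioo_subset_Icc_self hx)
      have he : (0:ℝ) < Real.exp (K * x) := Real.exp_pos _
      have hge : -(K * E x) ≤ 2 * (1 + q x) * (v x * deriv v x) :=
        neg_le_of_abs_le hb
      calc (0:ℝ) ≤ (2 * (1 + q x) * (v x * deriv v x) + K * E x) * Real.exp (K * x) := by
            apply mul_nonneg (by linarith) he.le
        _ = 2 * (1 + q x) * (v x * deriv v x) * Real.exp (K * x) +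
            E x * (Real.exp (K * x) * K) := by ring
  have hEr₀ : E r₀ = 0 := by rw [hE]; simp [h0, h0']
  have hmem₀ : r₀ ∈ Icc s t := ⟨min_le_right _ _, le_max_right _ _⟩
  have hmemr : r ∈ Icc s t := ⟨min_le_left _ _, le_max_left _ _⟩
  have hEr : E r ≤ 0 := by
    rcases le_total r₀ r with h | h
    · have h2 := hFanti hmem₀ hmemr h
      simp only [hEr₀, zero_mul] at h2
      exact le_of_not_gt fun hpos => absurd h2 (not_le.2 (mul_pos hpos (Real.exp_pos _)))
    · have h2 := hGmono hmemr hmem₀ h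
      simp only [hEr₀, zero_mul] at h2
      exact le_of_not_gt fun hpos => absurd h2 (not_le.2 (mul_pos hpos (Real.exp_pos _)))
  have hvv : v r * v r = 0 := by
    have h1 := mul_self_nonneg (v r)
    have h2 := mul_self_nonneg (deriv v r)
    have h3 : E r = v r * v r + deriv v r * deriv v r := rfl
    nlinarith
  exact mul_self_eq_zero.mp hvv
open Set MeasureTheory

lemma rpow_shift {x : ℝ} (hx : 0 < x) (p : ℝ) : x ^ p / x ^ 2 = x ^ (p - 2) := by
  rw [div_eq_iff (by positivity : (x:ℝ)^2 ≠ 0), ← Real.rpow_natCast x 2,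
    ← Real.rpow_add hx]
  norm_num

set_option maxHeartbeats 2000000 in
lemma blowup_lower {q v : ℝ → ℝ} {a : ℝ} (ha0 : 0 < a) (ha1 : a < 1)
    (hd : ∀ r ∈ Ioo (0:ℝ) 1, DifferentiableAt ℝ v r ∧ DifferentiableAt ℝ (deriv v) r)
    (heq : ∀ r ∈ Ioo (0:ℝ) 1, deriv (deriv v) r = q r * v r)
    (hq : ∀ r ∈ Ioo (0:ℝ) 1, r < a → 3 / (4 * r ^ 2) ≤ q r)
    (hva : v a = 0) (hv'a : deriv v a = -1) :
    ∀ r ∈ Ioo (0:ℝ) a, a ^ ((3:ℝ)/2) / 4 * (r ^ (-(1:ℝ)/2) - r ^ ((3:ℝ)/2) / a ^ 2) < v r := by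
  set ε : ℝ := a ^ ((3:ℝ)/2) / 4 with hε
  have hεpos : 0 < ε := by
    have := Real.rpow_pos_of_pos ha0 ((3:ℝ)/2); positivity
  set φ : ℝ → ℝ := fun x => ε * (x ^ (-(1:ℝ)/2) - x ^ ((3:ℝ)/2) / a ^ 2) with hφ
  set φ' : ℝ → ℝ :=
    fun x => ε * ((-(1:ℝ)/2) * x ^ (-(3:ℝ)/2) - (3:ℝ)/2 * x ^ ((1:ℝ)/2) / a ^ 2) with hφ'
  -- derivative of φ
  have f1 : ∀ x : ℝ, 0 < x → HasDerivAt φ (φ' x) x := by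
    intro x hx
    have h1 : HasDerivAt (fun y : ℝ => y ^ (-(1:ℝ)/2)) ((-(1:ℝ)/2) * x ^ (-(3:ℝ)/2)) x := by
      have := Real.hasDerivAt_rpow_const (x := x) (p := -(1:ℝ)/2) (Or.inl hx.ne')
      convert this using 2
      norm_num
    have h2 : HasDerivAt (fun y : ℝ => y ^ ((3:ℝ)/2)) ((3:ℝ)/2 * x ^ ((1:ℝ)/2)) x := by
      have := Real.hasDerivAt_rpow_const (x := x) (p := (3:ℝ)/2) (Or.inl hx.ne')
      convert this using 2
      norm_num
    exact (h1.sub (h2.div_const (a ^ 2))).const_mul ε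
  -- derivative of φ'
  have f2 : ∀ x : ℝ, 0 < x → HasDerivAt φ' (3/(4*x^2) * φ x) x := by
    intro x hx
    have h1 : HasDerivAt (fun y : ℝ => y ^ (-(3:ℝ)/2)) ((-(3:ℝ)/2) * x ^ (-(5:ℝ)/2)) x := by
      have := Real.hasDerivAt_rpow_const (x := x) (p := -(3:ℝ)/2) (Or.inl hx.ne')
      convert this using 2
      norm_num
    have h2 : HasDerivAt (fun y : ℝ => y ^ ((1:ℝ)/2)) ((1:ℝ)/2 * x ^ (-(1:ℝ)/2)) x := by
      have := Real.hasDerivAt_rpow_const (x := x) (p := (1:ℝ)/2) (Or.inl hx.ne')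
      convert this using 2
      norm_num
    have h := ((h1.const_mul ((-(1:ℝ)/2))).sub ((h2.const_mul ((3:ℝ)/2)).div_const (a ^ 2))).const_mul ε
    have e : ε * (-(1:ℝ)/2 * (-(3:ℝ)/2 * x ^ (-(5:ℝ)/2)) - (3:ℝ)/2 * ((1:ℝ)/2 * x ^ (-(1:ℝ)/2)) / a ^ 2)
        = 3/(4*x^2) * φ x := by
      have e1 : x ^ (-(1:ℝ)/2) / x ^ 2 = x ^ (-(5:ℝ)/2) := by
        rw [rpow_shift hx]; norm_num
      have e2 : x ^ ((3:ℝ)/2) / x ^ 2 = x ^ (-(1:ℝ)/2) := by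
        rw [rpow_shift hx]; norm_num
      have hx2 : (x:ℝ)^2 ≠ 0 := pow_ne_zero 2 (ne_of_gt hx)
      have e3 : x ^ ((3:ℝ)/2) = x ^ (-(1:ℝ)/2) * x ^ 2 := by
        rw [← e2]; field_simp
      rw [hφ, ← e1, ← e2]
      field_simp
      have e4 : x ^ (-(1:ℝ)/2) = x ^ (-((1:ℝ)/2)) := by rw [neg_div]
      linear_combination (4 * a ^ 2) * e3 + (4 * a ^ 2 * x ^ 2) * e4
    rwa [e] at h
  -- value facts
  have e2a : a ^ ((3:ℝ)/2) / a ^ 2 = a ^ (-(1:ℝ)/2) := by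
    rw [rpow_shift ha0]; norm_num
  have e4a : a ^ ((1:ℝ)/2) / a ^ 2 = a ^ (-(3:ℝ)/2) := by
    rw [rpow_shift ha0]; norm_num
  have e5a : a ^ ((3:ℝ)/2) * a ^ (-(3:ℝ)/2) = 1 := by
    rw [← Real.rpow_add ha0]; norm_num
  have f3 : φ a = 0 := by
    rw [hφ]; simp only; rw [e2a]; ring
  have f4 : φ' a = -(1/2) := by
    rw [hφ', hε]; simp only
    linear_combination (-(3:ℝ)/8 * a ^ ((3:ℝ)/2)) * e4a + (-(1:ℝ)/2) * e5a
  have f5 : ∀ x ∈ Ioo (0:ℝ) a, 0 < φ x := by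
    intro x hx
    have e3x : x ^ ((3:ℝ)/2) = x ^ (-(1:ℝ)/2) * x ^ 2 := by
      have e2x : x ^ ((3:ℝ)/2) / x ^ 2 = x ^ (-(1:ℝ)/2) := by
        rw [rpow_shift hx.1]; norm_num
      have hx2 : (x:ℝ)^2 ≠ 0 := pow_ne_zero 2 (ne_of_gt hx.1)
      rw [← e2x, div_mul_cancel₀ _ hx2]
    have hxp : 0 < x ^ (-(1:ℝ)/2) := Real.rpow_pos_of_pos hx.1 _
    have hx2 : x ^ 2 < a ^ 2 := by nlinarith [hx.1, hx.2]
    rw [hφ]; simp only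
    apply mul_pos hεpos
    rw [e3x, sub_pos, div_lt_iff₀ (by positivity)]
    nlinarith [hxp, hx2]
  -- the difference function
  set g : ℝ → ℝ := fun x => v x - φ x with hg
  have hderg : ∀ x ∈ Ioo (0:ℝ) 1, HasDerivAt g (deriv v x - φ' x) x :=
    fun x hx => ((hd x hx).1.hasDerivAt.sub (f1 x hx.1))
  have hma : a ∈ Ioo (0:ℝ) 1 := ⟨ha0, ha1⟩
  have hga : g a = 0 := by rw [hg]; simp only; rw [hva, f3]; ring
  have hderga : HasDerivAt g (-(1/2)) a := by
    have h := hderg a hma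
    rw [hv'a, f4] at h
    norm_num at h ⊢
    exact h
  -- g is positive slightly to the left of a
  have hslope : Filter.Tendsto (slope g a) (nhdsWithin a {x | x ≠ a}) (nhds (-(1/2))) :=
    hasDerivAt_iff_tendsto_slope.1 hderga
  have hmonole : nhdsWithin a (Iio a) ≤ nhdsWithin a {x | x ≠ a} :=
    nhdsWithin_mono a (fun x hx => ne_of_lt hx)
  have hev : ∀ᶠ x in nhdsWithin a (Iio a), slope g a x < 0 :=
    (hslope.mono_left hmonole).eventually_lt_const (by norm_num)
  have hev2 : ∀ᶠ x in nhdsWithin a (Iio a), 0 < g x := by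
    filter_upwards [hev, self_mem_nhdsWithin] with x h1 h2
    rw [slope_def_field, hga, sub_zero] at h1
    rcases div_neg_iff.1 h1 with ⟨hp, hn⟩ | ⟨hp, hn⟩
    · exact hp
    · exfalso; simp only [mem_Iio] at h2; linarith
  obtain ⟨l, hl, hIoo⟩ := mem_nhdsLT_iff_exists_Ioo_subset.1 hev2
  simp only [mem_Iio] at hl
  -- main argument by contradiction
  intro r hr
  by_contra hcon
  push_neg at hcon
  have hgr : g r ≤ 0 := by
    rw [hg]; simp only; rw [hφ]; simp only; linarith
  set m : ℝ := max l r with hm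
  have hma' : m < a := max_lt hl hr.2
  set c : ℝ := (m + a) / 2 with hc
  have hmc : m < c := by rw [hc]; linarith
  have hca : c < a := by rw [hc]; linarith
  have hrc : r ≤ c := le_trans (le_max_right l r) hmc.le
  have hlc : l < c := lt_of_le_of_lt (le_max_left l r) hmc
  have hsub1 : Icc r c ⊆ Ioo (0:ℝ) 1 :=
    fun x hx => ⟨lt_of_lt_of_le hr.1 hx.1, by linarith [hx.2]⟩
  have hcontg : ContinuousOn g (Icc r c) :=
    fun x hx => ((hderg x (hsub1 hx)).differentiableAt.continuousAt).continuousWithinAt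
  set S : Set ℝ := Icc r c ∩ g ⁻¹' (Iic 0) with hS
  have hSclosed : IsClosed S := hcontg.preimage_isClosed_of_isClosed isClosed_Icc isClosed_Iic
  have hScomp : IsCompact S := isCompact_Icc.of_isClosed_subset hSclosed inter_subset_left
  have hSne : r ∈ S := ⟨⟨le_refl r, hrc⟩, hgr⟩
  set t : ℝ := sSup S with htdef
  have htS : t ∈ S := hScomp.sSup_mem ⟨r, hSne⟩
  have htIcc : t ∈ Icc r c := htS.1
  have hgt : g t ≤ 0 := htS.2
  have hta : t < a := lt_of_le_of_lt htIcc.2 hca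
  have ht0 : 0 < t := lt_of_lt_of_le hr.1 htIcc.1
  have hsub2 : Icc t a ⊆ Ioo (0:ℝ) 1 :=
    fun x hx => ⟨lt_of_lt_of_le ht0 hx.1, lt_of_le_of_lt hx.2 ha1⟩
  have hpos : ∀ x ∈ Ioo t a, 0 < g x := by
    intro x hx
    rcases le_or_gt x c with hxc | hxc
    · by_contra hnp
      push_neg at hnp
      have hxS : x ∈ S := ⟨⟨le_trans htIcc.1 hx.1.le, hxc⟩, hnp⟩
      have := le_csSup hScomp.bddAbove hxS
      linarith [hx.1]
    · exact hIoo ⟨lt_trans hlc hxc, hx.2⟩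
  have hvpos : ∀ x ∈ Ioo t a, 0 < v x := by
    intro x hx
    have h1 := hpos x hx
    have h2 := f5 x ⟨lt_trans ht0 hx.1, hx.2⟩
    rw [hg] at h1; simp only at h1
    linarith
  -- g' is monotone on [t, a]
  have hg'cont : ContinuousOn (fun x => deriv v x - φ' x) (Icc t a) := by
    intro x hx
    have hx' := hsub2 hx
    exact (((hd x hx').2.continuousAt).sub
      ((f2 x hx'.1).differentiableAt.continuousAt)).continuousWithinAt
  have hg'diff : DifferentiableOn ℝ (fun x => deriv v x - φ' x) (interior (Icc t a)) := by
    rw [interior_Icc]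
    intro x hx
    have hx' := hsub2 (Ioo_subset_Icc_self hx)
    exact ((hd x hx').2.sub (f2 x hx'.1).differentiableAt).differentiableWithinAt
  have hmono : MonotoneOn (fun x => deriv v x - φ' x) (Icc t a) := by
    apply monotoneOn_of_deriv_nonneg (convex_Icc t a) hg'cont hg'diff
    intro x hx
    rw [interior_Icc] at hx
    have hx' := hsub2 (Ioo_subset_Icc_self hx)
    have hD : HasDerivAt (fun x => deriv v x - φ' x) _ x := ((hd x hx').2.hasDerivAt).sub (f2 x hx'.1)
    rw [hD.deriv, heq x hx']
    have hA := hq x hx' (lt_of_lt_of_le hx.2 (le_refl a))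
    have hB := hvpos x hx
    have hC := hpos x hx
    have hD2 : (0:ℝ) < 3/(4*x^2) := by
      have hx0 : (0:ℝ) < x := hx'.1
      positivity
    rw [hg] at hC; simp only at hC
    nlinarith [mul_le_mul_of_nonneg_right hA hB.le, mul_pos hD2 (by linarith : 0 < v x - φ x)]
  have hg'a : deriv v a - φ' a = -(1/2) := by rw [hv'a, f4]; norm_num
  have hle : ∀ x ∈ Icc t a, deriv v x - φ' x ≤ -(1/2) := by
    intro x hx
    have h2 := hmono hx (right_mem_Icc.2 hta.le) hx.2
    simp only at h2
    rwa [hg'a] at h2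
  -- ψ = g + x/2 is antitone on [t, a]
  have hanti : AntitoneOn (fun x => g x + x / 2) (Icc t a) := by
    apply antitoneOn_of_deriv_nonpos (convex_Icc t a)
    · exact ContinuousOn.add
        (fun x hx => ((hderg x (hsub2 hx)).differentiableAt.continuousAt).continuousWithinAt)
        (continuous_id.div_const 2).continuousOn
    · rw [interior_Icc]
      intro x hx
      have hx' := hsub2 (Ioo_subset_Icc_self hx)
      exact ((hderg x hx').differentiableAt.add
        ((differentiable_id.div_const 2) x)).differentiableWithinAt
    · intro x hx
      rw [interior_Icc] at hx
      have hx' := hsub2 (Ioo_subset_Icc_self hx)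
      have hlin : HasDerivAt (fun y : ℝ => y / 2) (1/2) x := by
        simpa using (hasDerivAt_id x).div_const 2
      have hD : HasDerivAt (fun x => g x + x / 2) _ x := (hderg x hx').add hlin
      rw [hD.deriv]
      have := hle x (Ioo_subset_Icc_self hx)
      linarith
  have hψ := hanti (left_mem_Icc.2 hta.le) (right_mem_Icc.2 hta.le) hta.le
  simp only at hψ
  rw [hga] at hψ
  clear_value t S c m g φ' φ ε
  nlinarith [hψ, hgt, hta]

set_option maxHeartbeats 2000000 in
/-- Uniqueness, up to scalar multiples, of square-integrable solutions of the
Bessel-type equation near the singular endpoint `0` (limit point case at `0`). -/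
theorem stmt9 (ν lam : ℝ) (hν : 1 < ν) (u₁ u₂ : ℝ → ℝ)
    (hd₁ : ∀ r ∈ Ioo (0 : ℝ) 1, DifferentiableAt ℝ u₁ r ∧ DifferentiableAt ℝ (deriv u₁) r)
    (hd₂ : ∀ r ∈ Ioo (0 : ℝ) 1, DifferentiableAt ℝ u₂ r ∧ DifferentiableAt ℝ (deriv u₂) r)
    (heq₁ : ∀ r ∈ Ioo (0 : ℝ) 1,
      -(deriv (deriv u₁) r) + (ν ^ 2 - 1 / 4) / r ^ 2 * u₁ r = lam * u₁ r)
    (heq₂ : ∀ r ∈ Ioo (0 : ℝ) 1,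
      -(deriv (deriv u₂) r) + (ν ^ 2 - 1 / 4) / r ^ 2 * u₂ r = lam * u₂ r)
    (hint₁ : IntegrableOn (fun r => (u₁ r) ^ 2) (Ioo 0 1))
    (hint₂ : IntegrableOn (fun r => (u₂ r) ^ 2) (Ioo 0 1)) :
    ∃ c₁ c₂ : ℝ, ¬(c₁ = 0 ∧ c₂ = 0) ∧ ∀ r ∈ Ioo (0 : ℝ) 1, c₁ * u₁ r + c₂ * u₂ r = 0 := by
  set q : ℝ → ℝ := fun r => (ν ^ 2 - 1/4) / r ^ 2 - lam with hqdef
  have hqc : ContinuousOn q (Ioo (0:ℝ) 1) := by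
    apply ContinuousOn.sub _ continuousOn_const
    exact ContinuousOn.div continuousOn_const (continuous_pow 2).continuousOn
      (fun x hx => pow_ne_zero 2 (ne_of_gt hx.1))
  have he₁ : ∀ r ∈ Ioo (0:ℝ) 1, deriv (deriv u₁) r = q r * u₁ r := by
    intro r hr
    have h := heq₁ r hr
    rw [hqdef]
    linear_combination (-1 : ℝ) * h
  have he₂ : ∀ r ∈ Ioo (0:ℝ) 1, deriv (deriv u₂) r = q r * u₂ r := by
    intro r hr
    have h := heq₂ r hr
    rw [hqdef]
    linear_combination (-1 : ℝ) * h
  have hW := wronskian_const hd₁ hd₂ he₁ he₂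
  have hhalf : (1/2 : ℝ) ∈ Ioo (0:ℝ) 1 := by norm_num
  set c : ℝ := u₁ (1/2) * deriv u₂ (1/2) - deriv u₁ (1/2) * u₂ (1/2) with hcdef
  by_cases hc : c = 0
  · -- Wronskian vanishes: solutions are dependent
    by_cases hz : ∀ r ∈ Ioo (0:ℝ) 1, u₂ r = 0
    · exact ⟨0, 1, by simp, fun r hr => by rw [hz r hr]; ring⟩
    · push_neg at hz
      obtain ⟨r₀, hr₀, hu₂⟩ := hz
      refine ⟨u₂ r₀, -(u₁ r₀), fun hpair => hu₂ hpair.1, ?_⟩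
      have comb := comb_props hd₁ hd₂ (u₂ r₀) (-(u₁ r₀))
      have hdv : ∀ r ∈ Ioo (0:ℝ) 1,
          DifferentiableAt ℝ (fun s => u₂ r₀ * u₁ s + -(u₁ r₀) * u₂ s) r ∧
          DifferentiableAt ℝ (deriv (fun s => u₂ r₀ * u₁ s + -(u₁ r₀) * u₂ s)) r :=
        fun r hr => ⟨(comb r hr).1, (comb r hr).2.2.1⟩
      have hde : ∀ r ∈ Ioo (0:ℝ) 1,
          deriv (deriv (fun s => u₂ r₀ * u₁ s + -(u₁ r₀) * u₂ s)) r
            = q r * (fun s => u₂ r₀ * u₁ s + -(u₁ r₀) * u₂ s) r := by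
        intro r hr
        rw [(comb r hr).2.2.2, he₁ r hr, he₂ r hr]
        ring
      have hv0 : (fun s => u₂ r₀ * u₁ s + -(u₁ r₀) * u₂ s) r₀ = 0 := by simp; ring
      have hv'0 : deriv (fun s => u₂ r₀ * u₁ s + -(u₁ r₀) * u₂ s) r₀ = 0 := by
        rw [(comb r₀ hr₀).2.1]
        have hWr := hW r₀ hr₀ (1/2) hhalf
        rw [← hcdef, hc] at hWr
        linarith
      intro r hr
      have := ode_zero hqc hdv hde hr₀ hv0 hv'0 r hr
      simpa using this
  · -- Nonvanishing Wronskian: contradiction with square-integrability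
    exfalso
    have hν2 : 0 < ν^2 - 1 := by nlinarith
    have hKpos : 0 < (ν^2 - 1)/(|lam| + 1) := by positivity
    set a : ℝ := min (1/2) (Real.sqrt ((ν^2 - 1)/(|lam| + 1))) with hadef
    have ha0 : 0 < a := lt_min (by norm_num) (Real.sqrt_pos.2 hKpos)
    have ha1 : a < 1 := lt_of_le_of_lt (min_le_left _ _) (by norm_num)
    have ha2 : a ∈ Ioo (0:ℝ) 1 := ⟨ha0, ha1⟩
    have hqa : ∀ r ∈ Ioo (0:ℝ) 1, r < a → 3/(4*r^2) ≤ q r := by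
      intro r hr hra
      have hr0 : (0:ℝ) < r := hr.1
      have hr2 : (0:ℝ) < r^2 := by positivity
      have hrs : r < Real.sqrt ((ν^2 - 1)/(|lam| + 1)) :=
        lt_of_lt_of_le hra (min_le_right _ _)
      have hr2K : r^2 < (ν^2 - 1)/(|lam| + 1) := (Real.lt_sqrt hr0.le).1 hrs
      have hkey : lam * r^2 ≤ ν^2 - 1 := by
        have h1 : lam * r^2 ≤ |lam| * r^2 :=
          mul_le_mul_of_nonneg_right (le_abs_self lam) hr2.le
        have h2 : |lam| * r^2 ≤ |lam| * ((ν^2-1)/(|lam|+1)) :=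
          mul_le_mul_of_nonneg_left hr2K.le (abs_nonneg lam)
        have h4 : (0:ℝ) < |lam| + 1 := by positivity
        have h3 : |lam| * ((ν^2-1)/(|lam|+1)) ≤ ν^2 - 1 := by
          rw [mul_comm, div_mul_eq_mul_div, div_le_iff₀ h4]
          nlinarith [abs_nonneg lam]
        linarith
      rw [hqdef]
      simp only
      rw [div_le_iff₀ (by positivity : (0:ℝ) < 4*r^2)]
      have hcan : (ν^2 - 1/4)/r^2 * r^2 = ν^2 - 1/4 := div_mul_cancel₀ _ (ne_of_gt hr2)
      nlinarith [hcan, hkey, hr2]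
    have hca := hW a ha2 (1/2) hhalf
    rw [← hcdef] at hca
    set α : ℝ := u₂ a / c with hα
    set β : ℝ := -(u₁ a) / c with hβ
    have comb := comb_props hd₁ hd₂ α β
    have hdv : ∀ r ∈ Ioo (0:ℝ) 1,
        DifferentiableAt ℝ (fun s => α * u₁ s + β * u₂ s) r ∧
        DifferentiableAt ℝ (deriv (fun s => α * u₁ s + β * u₂ s)) r :=
      fun r hr => ⟨(comb r hr).1, (comb r hr).2.2.1⟩
    have hde : ∀ r ∈ Ioo (0:ℝ) 1,
        deriv (deriv (fun s => α * u₁ s + β * u₂ s)) r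
          = q r * (fun s => α * u₁ s + β * u₂ s) r := by
      intro r hr
      rw [(comb r hr).2.2.2, he₁ r hr, he₂ r hr]
      simp only
      ring
    have hva : (fun s => α * u₁ s + β * u₂ s) a = 0 := by
      simp only [hα, hβ]
      field_simp
      ring
    have hv'a : deriv (fun s => α * u₁ s + β * u₂ s) a = -1 := by
      rw [(comb a ha2).2.1, hα, hβ]
      field_simp
      linear_combination -hca
    have hblow := blowup_lower ha0 ha1 hdv hde hqa hva hv'a
    have hvcont : ContinuousOn (fun s => α * u₁ s + β * u₂ s) (Ioo (0:ℝ) 1) :=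
      fun r hr => ((comb r hr).1.continuousAt).continuousWithinAt
    have hv2int : IntegrableOn (fun r => (α * u₁ r + β * u₂ r)^2) (Ioo (0:ℝ) 1) := by
      apply Integrable.mono' (g := fun r => 2*α^2 * (u₁ r)^2 + 2*β^2 * (u₂ r)^2)
      · exact (hint₁.const_mul _).add (hint₂.const_mul _)
      · exact ((hvcont.pow 2).aestronglyMeasurable measurableSet_Ioo)
      · refine Filter.Eventually.of_forall fun r => ?_
        rw [Real.norm_eq_abs, abs_of_nonneg (sq_nonneg _)]
        nlinarith [sq_nonneg (α * u₁ r - β * u₂ r)]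
    set ε : ℝ := a ^ ((3:ℝ)/2) / 4 with hε
    have hεpos : 0 < ε := by
      have := Real.rpow_pos_of_pos ha0 ((3:ℝ)/2)
      positivity
    set c₀ : ℝ := 3*ε/4 with hc₀def
    have hc₀ : 0 < c₀ := by rw [hc₀def]; linarith
    have hlow : ∀ r ∈ Ioo (0:ℝ) (a/2),
        r ^ (-1:ℝ) ≤ (1/c₀)^2 * (α * u₁ r + β * u₂ r)^2 := by
      intro r hr
      have hr0 : (0:ℝ) < r := hr.1
      have hra : r < a := lt_of_lt_of_le hr.2 (by linarith)
      have hb := hblow r ⟨hr0, hra⟩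
      have hp : 0 < r ^ (-(1:ℝ)/2) := Real.rpow_pos_of_pos hr0 _
      have e3r : r ^ ((3:ℝ)/2) = r ^ (-(1:ℝ)/2) * r^2 := by
        have e2r : r ^ ((3:ℝ)/2) / r ^ 2 = r ^ (-(1:ℝ)/2) := by
          rw [rpow_shift hr0]; norm_num
        have h2 : (r:ℝ)^2 ≠ 0 := pow_ne_zero 2 (ne_of_gt hr0)
        rw [← e2r]; field_simp
      have hr2 : r^2 ≤ a^2/4 := by nlinarith [hr.2, hr0]
      have ha2p : (0:ℝ) < a^2 := by positivity
      have hest : r ^ ((3:ℝ)/2) / a^2 ≤ r ^ (-(1:ℝ)/2) / 4 := by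
        rw [e3r, div_le_div_iff₀ ha2p (by norm_num : (0:ℝ) < 4)]
        nlinarith [hp, hr2, ha2p]
      have hcp : c₀ * r ^ (-(1:ℝ)/2)
          = ε * (r ^ (-(1:ℝ)/2) - r ^ (-(1:ℝ)/2)/4) := by
        rw [hc₀def]; ring
      have hvgt : c₀ * r ^ (-(1:ℝ)/2) < α * u₁ r + β * u₂ r := by
        have h5 : ε * (r ^ (-(1:ℝ)/2) - r ^ (-(1:ℝ)/2)/4)
            ≤ ε * (r ^ (-(1:ℝ)/2) - r ^ ((3:ℝ)/2)/a^2) := by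
          apply mul_le_mul_of_nonneg_left _ hεpos.le
          linarith [hest]
        rw [hcp]
        calc ε * (r ^ (-(1:ℝ)/2) - r ^ (-(1:ℝ)/2)/4)
            ≤ ε * (r ^ (-(1:ℝ)/2) - r ^ ((3:ℝ)/2)/a^2) := h5
          _ < α * u₁ r + β * u₂ r := hb
      have hp2 : (r ^ (-(1:ℝ)/2)) ^ (2:ℕ) = r ^ (-1:ℝ) := by
        rw [← Real.rpow_natCast (r ^ (-(1:ℝ)/2)) 2, ← Real.rpow_mul hr0.le]
        norm_num
      have hple : r ^ (-(1:ℝ)/2) ≤ (α * u₁ r + β * u₂ r) / c₀ :=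
        (le_div_iff₀ hc₀).2 (by linarith [hvgt])
      have hps := pow_le_pow_left₀ hp.le hple 2
      rw [hp2] at hps
      calc r ^ (-1:ℝ) ≤ ((α * u₁ r + β * u₂ r)/c₀)^2 := hps
        _ = (1/c₀)^2 * (α * u₁ r + β * u₂ r)^2 := by ring
    have h1int : IntegrableOn (fun r => r ^ (-1:ℝ)) (Ioo (0:ℝ) (a/2)) := by
      apply Integrable.mono' (g := fun r => (1/c₀)^2 * (α * u₁ r + β * u₂ r)^2)
      · exact ((hv2int.mono_set (Ioo_subset_Ioo_right (by linarith))).const_mul _)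
      · refine ContinuousOn.aestronglyMeasurable ?_ measurableSet_Ioo
        exact fun r hr => (Real.continuousAt_rpow_const r (-1)
          (Or.inl (ne_of_gt hr.1))).continuousWithinAt
      · rw [ae_restrict_iff' measurableSet_Ioo]
        refine Filter.Eventually.of_forall fun r hr => ?_
        rw [Real.norm_eq_abs, abs_of_pos (Real.rpow_pos_of_pos hr.1 _)]
        exact hlow r hr
    have hcontra := (intervalIntegral.integrableOn_Ioo_rpow_iff (by linarith : (0:ℝ) < a/2)).1 h1int
    norm_num at hcontra
end

section
/- Local well-posedness with quantitative bounds at the matching point: Let n ≥ 2 be an integer, τ ≥ 0, λᵢ > 0, b ≥ 10, M > 0, and let V : (0,∞) → ℝ be continuous with |V(r)| ≤ M for r ∈ [b−1, b+1]. There exists δ₀ ∈ (0, 1/2) (depending only on n, τ, λᵢ, b, M) such that for every 0 < δ ≤ δ₀ the following holds: given f(r) = 1 for 2 ≤ r ≤ b − δ, there is a unique continuously differentiable function f on [b−δ, b+δ] with f(b−δ) = 1 satisfying, for every r ∈ [b−δ, b+δ], τ² + ((n−1)²/2) f(r) + ((n−1)²/4) f(r)² + ((n−1)/2) f'(r) +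 λᵢ / exp(∫₂^r 2(1 + f(x)) dx) = V(r) (where f(x) = 1 for 2 ≤ x ≤ b−δ in the integral), and this solution satisfies 1/2 < f(r) < 2 for all r ∈ [b−δ, b+δ]. -/
open Set


lemma exp_diff_le {c a b : ℝ} (ha : a ≤ c) (hb : b ≤ c) :
    |Real.exp a - Real.exp b| ≤ Real.exp c * |a - b| := by
  wlog h : b ≤ a generalizing a b
  · rw [abs_sub_comm, abs_sub_comm a b]; exact this hb ha (le_of_not_ge h)
  have h1 : Real.exp a ≤ Real.exp c := Real.exp_le_exp.2 ha
  have h2 : Real.exp b ≤ Real.exp a := Real.exp_le_exp.2 h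
  have h3 : Real.exp a * ((b - a) + 1) ≤ Real.exp a * Real.exp (b - a) :=
    mul_le_mul_of_nonneg_left (by simpa [add_comm] using Real.add_one_le_exp (b - a))
      (Real.exp_pos a).le
  rw [← Real.exp_add] at h3
  have h4 : Real.exp (a + (b - a)) = Real.exp b := by ring_nf
  rw [h4] at h3
  rw [abs_of_nonneg (by linarith), abs_of_nonneg (by linarith)]
  nlinarith [Real.exp_pos b, Real.exp_pos a]

lemma clamp_lip (lo hi a b : ℝ) :
    |max lo (min a hi) - max lo (min b hi)| ≤ |a - b| :=
  calc |max lo (min a hi) - max lo (min b hi)|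
      = |max (min a hi) lo - max (min b hi) lo| := by rw [max_comm lo, max_comm lo]
    _ ≤ |min a hi - min b hi| := abs_max_sub_max_le_abs _ _ _
    _ ≤ max |a - b| |hi - hi| := abs_min_sub_min_le_max _ _ _ _
    _ = |a - b| := by simp

lemma clamp_mem (lo hi a : ℝ) (h : lo ≤ hi) :
    lo ≤ max lo (min a hi) ∧ max lo (min a hi) ≤ hi :=
  ⟨le_max_left _ _, max_le h (min_le_right _ _)⟩

lemma clamp_eq {lo hi a : ℝ} (h1 : lo ≤ a) (h2 : a ≤ hi) :
    max lo (min a hi) = a := by rw [min_eq_left h2, max_eq_right h1]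

lemma icc_mem_nhdsWithin_Ici {a b t : ℝ} (ht : t ∈ Ico a b) :
    Icc a b ∈ nhdsWithin t (Ici t) := by
  rw [mem_nhdsWithin]
  exact ⟨Iio b, isOpen_Iio, ht.2, fun x hx => ⟨le_trans ht.1 hx.2, le_of_lt hx.1⟩⟩

/-- Pointwise Lipschitz-type estimate for the vector field. -/
lemma vfield_dist_le {nR lam ρ Ex A f1 f2 w1 w2 d : ℝ} (hnR : 1 ≤ nR) (hlam : 0 ≤ lam)
    (hf1 : |f1| ≤ ρ) (hf2 : |f2| ≤ ρ)
    (hd1 : |f1 - f2| ≤ d) (hd0 : 0 ≤ d)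
    (hexp : |Real.exp (-w1) - Real.exp (-w2)| ≤ Ex * d) :
    dist (((2/nR) * (A - nR^2/2 * f1 - nR^2/4 * f1^2 - lam * Real.exp (-w1)), 2 + 2*f1) : ℝ × ℝ)
         ((2/nR) * (A - nR^2/2 * f2 - nR^2/4 * f2^2 - lam * Real.exp (-w2)), 2 + 2*f2)
      ≤ (2 + nR + nR * ρ + 2 * lam * Ex) * d := by
  have hnR0 : (0:ℝ) < nR := by linarith
  have hρ0 : (0:ℝ) ≤ ρ := le_trans (abs_nonneg _) hf1
  have hEx0 : (0:ℝ) ≤ Ex * d := le_trans (abs_nonneg _) hexp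
  rw [Prod.dist_eq]
  apply max_le
  · rw [Real.dist_eq]
    have key : (2/nR) * (A - nR^2/2 * f1 - nR^2/4 * f1^2 - lam * Real.exp (-w1))
        - (2/nR) * (A - nR^2/2 * f2 - nR^2/4 * f2^2 - lam * Real.exp (-w2))
        = (2/nR) * (nR^2/2 * (f2 - f1) + nR^2/4 * ((f2 - f1) * (f2 + f1))
            + lam * (Real.exp (-w2) - Real.exp (-w1))) := by ring
    rw [key, abs_mul]
    have h2nR : |2/nR| = 2/nR := abs_of_pos (by positivity)
    rw [h2nR]
    have hinner : |nR^2/2 * (f2 - f1) + nR^2/4 * ((f2 - f1) * (f2 + f1))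
        + lam * (Real.exp (-w2) - Real.exp (-w1))|
        ≤ nR^2/2 * d + nR^2/4 * (d * (2*ρ)) + lam * (Ex * d) := by
      refine le_trans (abs_add_le _ _) (add_le_add (le_trans (abs_add_le _ _) (add_le_add ?_ ?_)) ?_)
      · rw [abs_mul, abs_sub_comm]
        exact mul_le_mul (le_of_eq (abs_of_nonneg (by positivity))) hd1 (abs_nonneg _)
          (by positivity)
      · rw [abs_mul, abs_mul, abs_sub_comm]
        have hsum : |f2 + f1| ≤ 2*ρ := by
          calc |f2 + f1| ≤ |f2| + |f1| := abs_add_le _ _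
            _ ≤ 2*ρ := by linarith
        have h1 : |f1 - f2| * |f2 + f1| ≤ d * (2*ρ) :=
          mul_le_mul hd1 hsum (abs_nonneg _) hd0
        calc |nR^2/4| * (|f1 - f2| * |f2 + f1|) = nR^2/4 * (|f1 - f2| * |f2 + f1|) := by
              rw [abs_of_nonneg (by positivity)]
          _ ≤ nR^2/4 * (d * (2*ρ)) := by nlinarith
      · rw [abs_mul, abs_sub_comm, abs_of_nonneg hlam]
        exact mul_le_mul_of_nonneg_left hexp hlam
    calc 2/nR * |nR^2/2 * (f2 - f1) + nR^2/4 * ((f2 - f1) * (f2 + f1))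
        + lam * (Real.exp (-w2) - Real.exp (-w1))|
        ≤ 2/nR * (nR^2/2 * d + nR^2/4 * (d * (2*ρ)) + lam * (Ex * d)) := by
          apply mul_le_mul_of_nonneg_left hinner (by positivity)
      _ = nR * d + nR * ρ * d + (2/nR) * lam * (Ex * d) := by field_simp; ring
      _ ≤ (2 + nR + nR * ρ + 2 * lam * Ex) * d := by
          have h1 : (2/nR) * lam * (Ex * d) ≤ 2 * lam * (Ex * d) := by
            apply mul_le_mul_of_nonneg_right _ hEx0
            apply mul_le_mul_of_nonneg_right _ hlam
            rw [div_le_iff₀ hnR0]; nlinarith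
          nlinarith [mul_nonneg (mul_nonneg hnR0.le hρ0) hd0]
  · rw [Real.dist_eq]
    have : (2 + 2*f1) - (2 + 2*f2) = 2 * (f1 - f2) := by ring
    rw [this, abs_mul]
    have h2 : |(2:ℝ)| * |f1 - f2| ≤ 2 * d := by rw [abs_two]; linarith
    nlinarith [mul_nonneg (mul_nonneg hnR0.le hρ0) hd0, mul_nonneg hlam hEx0,
      mul_nonneg hnR0.le hd0]

/-- Pointwise norm bound for the clamped vector field. -/
lemma vfield_norm_le {nR lam Mv A f w : ℝ} (hnR : 1 ≤ nR) (hlam : 0 < lam)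
    (hA : |A| ≤ Mv) (hf1 : 3/4 ≤ f) (hf2 : f ≤ 5/4) (hw : 0 ≤ w) :
    ‖(((2/nR) * (A - nR^2/2 * f - nR^2/4 * f^2 - lam * Real.exp (-w)), 2 + 2*f) : ℝ × ℝ)‖
      ≤ 5 + 2*Mv + 3*nR + 2*lam := by
  have hnR0 : (0:ℝ) < nR := by linarith
  have hMv0 : 0 ≤ Mv := le_trans (abs_nonneg _) hA
  have hexp1 : Real.exp (-w) ≤ 1 := Real.exp_le_one_iff.2 (by linarith)
  have hexp0 : 0 < Real.exp (-w) := Real.exp_pos _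
  have hAle := abs_le.1 hA
  rw [Prod.norm_def]
  apply max_le
  · simp only [Real.norm_eq_abs]
    rw [abs_mul, abs_of_pos (show (0:ℝ) < 2/nR by positivity)]
    have hinner : |A - nR^2/2 * f - nR^2/4 * f^2 - lam * Real.exp (-w)|
        ≤ Mv + nR^2 * (9/8) + lam := by
      have hfsq : f^2 ≤ 25/16 := by nlinarith
      have hfsq0 : 0 ≤ f^2 := sq_nonneg f
      have e1 : nR^2/2 * f ≤ nR^2 * (5/8) := by nlinarith [sq_nonneg nR]
      have e1' : 0 ≤ nR^2/2 * f := by positivity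
      have e2 : nR^2/4 * f^2 ≤ nR^2 * (25/64) := by nlinarith [sq_nonneg nR]
      have e2' : 0 ≤ nR^2/4 * f^2 := by positivity
      have e3 : lam * Real.exp (-w) ≤ lam := by nlinarith
      have e3' : 0 < lam * Real.exp (-w) := by positivity
      rw [abs_le]
      constructor <;> nlinarith [sq_nonneg nR]
    have hu1 : 2/nR * nR = 2 := by field_simp
    have hu2 : 2/nR ≤ 2 := by rw [div_le_iff₀ hnR0]; nlinarith
    calc 2/nR * |A - nR^2/2 * f - nR^2/4 * f^2 - lam * Real.exp (-w)|
        ≤ 2/nR * (Mv + nR^2 * (9/8) + lam) :=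
          mul_le_mul_of_nonneg_left hinner (by positivity)
      _ = (2/nR)*Mv + (2/nR*nR)*(nR*(9/8)) + (2/nR)*lam := by ring
      _ = (2/nR)*Mv + 2*(nR*(9/8)) + (2/nR)*lam := by rw [hu1]
      _ ≤ 5 + 2*Mv + 3*nR + 2*lam := by
          have l1 : (2/nR)*Mv ≤ 2*Mv := mul_le_mul_of_nonneg_right hu2 hMv0
          have l2 : (2/nR)*lam ≤ 2*lam := mul_le_mul_of_nonneg_right hu2 hlam.le
          nlinarith
  · simp only [Real.norm_eq_abs]
    rw [abs_of_nonneg (by linarith)]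
    nlinarith

set_option maxHeartbeats 1000000 in
/-- Local well-posedness, with quantitative bounds, of the curvature-matching
ODE at the matching point `b`. -/
theorem stmt12 (n : ℕ) (hn : 2 ≤ n) (τ lamI b M : ℝ) (hτ : 0 ≤ τ)
    (hlam : 0 < lamI) (hb : 10 ≤ b) (hM : 0 < M)
    (V : ℝ → ℝ) (hVc : ContinuousOn V (Ioi 0))
    (hVb : ∀ r ∈ Icc (b - 1) (b + 1), |V r| ≤ M) :
    ∃ δ₀ : ℝ, 0 < δ₀ ∧ δ₀ < 1 / 2 ∧ ∀ δ : ℝ, 0 < δ → δ ≤ δ₀ →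
      ∃ F F' : ℝ → ℝ,
        (∀ r, 2 ≤ r → r ≤ b - δ → F r = 1) ∧
        (∀ r ∈ Icc (b - δ) (b + δ), HasDerivWithinAt F (F' r) (Icc (b - δ) (b + δ)) r) ∧
        ContinuousOn F' (Icc (b - δ) (b + δ)) ∧
        (∀ r ∈ Icc (b - δ) (b + δ),
          τ ^ 2 + ((n : ℝ) - 1) ^ 2 / 2 * F r + ((n : ℝ) - 1) ^ 2 / 4 * (F r) ^ 2
            + ((n : ℝ) - 1) / 2 * F' r
            + lamI / Real.exp (∫ x in (2 : ℝ)..r, 2 * (1 + F x)) = V r) ∧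
        (∀ r ∈ Icc (b - δ) (b + δ), 1 / 2 < F r ∧ F r < 2) ∧
        (∀ G G' : ℝ → ℝ,
          (∀ r, 2 ≤ r → r ≤ b - δ → G r = 1) →
          (∀ r ∈ Icc (b - δ) (b + δ), HasDerivWithinAt G (G' r) (Icc (b - δ) (b + δ)) r) →
          ContinuousOn G' (Icc (b - δ) (b + δ)) →
          (∀ r ∈ Icc (b - δ) (b + δ),
            τ ^ 2 + ((n : ℝ) - 1) ^ 2 / 2 * G r + ((n : ℝ) - 1) ^ 2 / 4 * (G r) ^ 2
              + ((n : ℝ) - 1) / 2 * G' r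
              + lamI / Real.exp (∫ x in (2 : ℝ)..r, 2 * (1 + G x)) = V r) →
          ∀ r ∈ Icc (b - δ) (b + δ), G r = F r) := by
  have hn1 : (1:ℝ) ≤ (n:ℝ) - 1 := by
    have h2n : (2:ℝ) ≤ (n:ℝ) := by exact_mod_cast hn
    linarith
  set nR : ℝ := (n:ℝ) - 1 with hnRdef
  have hnRpos : (0:ℝ) < nR := lt_of_lt_of_le one_pos hn1
  have hnR0 : nR ≠ 0 := ne_of_gt hnRpos
  set C : ℝ := 5 + 2*(M + τ^2) + 3*nR + 2*lamI with hCdef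
  have hC : 0 < C := by nlinarith [sq_nonneg τ]
  clear_value nR C
  refine ⟨min (1/4) (1/(8*C)), lt_min (by norm_num) (by positivity),
    lt_of_le_of_lt (min_le_left _ _) (by norm_num), ?_⟩
  intro δ hδ0 hδle
  have hδ4 : δ ≤ 1/4 := le_trans hδle (min_le_left _ _)
  have hδC : δ ≤ 1/(8*C) := le_trans hδle (min_le_right _ _)
  have hCδ : C * (2*δ) ≤ 1/4 := by
    have h8 : δ * (8*C) ≤ 1 := by
      rw [← le_div_iff₀ (by positivity)]
      simpa [one_div] using hδC
    nlinarith
  set t₀ : ℝ := b - δ with ht₀def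
  set t₁ : ℝ := b + δ with ht₁def
  set w₀ : ℝ := 4*(b - δ - 2) with hw₀def
  have h2t₀ : (2:ℝ) ≤ t₀ := by rw [ht₀def]; linarith
  have ht01 : t₀ ≤ t₁ := by rw [ht₀def, ht₁def]; linarith
  have hw₀1 : (0:ℝ) ≤ w₀ - 1 := by rw [hw₀def]; linarith
  have hsubV : Icc t₀ t₁ ⊆ Icc (b-1) (b+1) := Icc_subset_Icc (by rw [ht₀def]; linarith)
    (by rw [ht₁def]; linarith)
  have hsub0 : Icc t₀ t₁ ⊆ Ioi 0 := fun x hx => by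
    have := hx.1; simp only [mem_Ioi]; rw [ht₀def] at this; linarith
  clear_value t₀ t₁ w₀
  set cl1 : ℝ → ℝ := fun x => max (3/4) (min x (5/4)) with hcl1def
  set cl2 : ℝ → ℝ := fun x => max (w₀-1) (min x (w₀+1)) with hcl2def
  have hcl1c : Continuous cl1 := continuous_const.max (continuous_id.min continuous_const)
  have hcl2c : Continuous cl2 := continuous_const.max (continuous_id.min continuous_const)
  set vc : ℝ → ℝ × ℝ → ℝ × ℝ := fun t p =>
    ((2/nR) * (V t - τ^2 - nR^2/2 * cl1 p.1 - nR^2/4 * (cl1 p.1)^2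
      - lamI * Real.exp (-(cl2 p.2))), 2 + 2 * cl1 p.1) with hvcdef
  set v : ℝ → ℝ × ℝ → ℝ × ℝ := fun t p =>
    ((2/nR) * (V t - τ^2 - nR^2/2 * p.1 - nR^2/4 * p.1^2
      - lamI * Real.exp (-p.2)), 2 + 2 * p.1) with hvdef
  -- global bound for the clamped field
  have hvcB : ∀ t ∈ Icc t₀ t₁, ∀ p : ℝ × ℝ, ‖vc t p‖ ≤ C := by
    intro t ht p
    have hVt : |V t - τ^2| ≤ M + τ^2 := by
      have := hVb t (hsubV ht)
      have := abs_le.1 this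
      rw [abs_le]; constructor <;> nlinarith [sq_nonneg τ]
    have h1 := vfield_norm_le (lam := lamI) (w := cl2 p.2) hn1 hlam hVt
      (clamp_mem (3/4) (5/4) p.1 (by norm_num)).1
      (clamp_mem (3/4) (5/4) p.1 (by norm_num)).2
      (le_trans hw₀1 (clamp_mem (w₀-1) (w₀+1) p.2 (by linarith)).1)
    rw [hCdef]
    exact h1
  -- Lipschitz for the clamped field
  have hLc : ∀ t, LipschitzOnWith (Real.toNNReal (2 + nR + nR*(5/4) + 2*lamI*1)) (vc t)
      (Metric.closedBall ((1:ℝ), w₀) (1/4)) := by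
    intro t
    rw [lipschitzOnWith_iff_dist_le_mul]
    intro p hp q hq
    rw [Real.coe_toNNReal _ (by nlinarith [mul_nonneg hnRpos.le hnRpos.le])]
    have hd1 : |cl1 p.1 - cl1 q.1| ≤ dist p q := by
      refine le_trans (clamp_lip _ _ _ _) ?_
      rw [← Real.dist_eq, Prod.dist_eq]
      exact le_max_left _ _
    have hf1 : |cl1 p.1| ≤ 5/4 := by
      have := clamp_mem (3/4) (5/4) p.1 (by norm_num)
      rw [abs_le]; constructor <;> [linarith [this.1]; exact this.2]
    have hf2 : |cl1 q.1| ≤ 5/4 := by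
      have := clamp_mem (3/4) (5/4) q.1 (by norm_num)
      rw [abs_le]; constructor <;> [linarith [this.1]; exact this.2]
    have hexp : |Real.exp (-(cl2 p.2)) - Real.exp (-(cl2 q.2))| ≤ 1 * dist p q := by
      have hcp : -(cl2 p.2) ≤ 0 := by
        have := (clamp_mem (w₀-1) (w₀+1) p.2 (by linarith)).1; linarith
      have hcq : -(cl2 q.2) ≤ 0 := by
        have := (clamp_mem (w₀-1) (w₀+1) q.2 (by linarith)).1; linarith
      have h1 := exp_diff_le hcp hcq
      rw [Real.exp_zero] at h1
      have h2 : |(-(cl2 p.2)) - (-(cl2 q.2))| = |cl2 p.2 - cl2 q.2| := by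
        rw [abs_sub_comm]; ring_nf
      rw [h2] at h1
      refine le_trans h1 ?_
      have h3 : |cl2 p.2 - cl2 q.2| ≤ dist p q := by
        refine le_trans (clamp_lip _ _ _ _) ?_
        rw [← Real.dist_eq, Prod.dist_eq]
        exact le_max_right _ _
      linarith
    simp only [hvcdef]
    exact vfield_dist_le hn1 hlam.le hf1 hf2 hd1 dist_nonneg hexp
  -- Picard–Lindelöf
  have hPL : IsPicardLindelof vc (tmin := t₀) (tmax := t₁) ⟨t₀, le_refl _, ht01⟩ ((1:ℝ), w₀)
      (⟨1/4, by norm_num⟩ : NNReal) 0 (⟨C, hC.le⟩ : NNReal)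
      (Real.toNNReal (2 + nR + nR*(5/4) + 2*lamI*1)) := by
    constructor
    · exact fun t _ => hLc t
    · intro x _
      have hV' : ContinuousOn V (Icc t₀ t₁) := hVc.mono hsub0
      exact (continuousOn_const.mul ((((hV'.sub continuousOn_const).sub
        continuousOn_const).sub continuousOn_const).sub continuousOn_const)).prodMk
        continuousOn_const
    · exact fun t ht x _ => hvcB t ht x
    · have hm : max (t₁ - t₀) (t₀ - t₀) = 2*δ := by
        rw [max_eq_left (by rw [ht₀def, ht₁def]; linarith), ht₀def, ht₁def]; ring
      show C * max (t₁ - t₀) (t₀ - t₀) ≤ 1/4 - 0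
      rw [hm]; linarith
  obtain ⟨Y, hY0', hYd⟩ := hPL.exists_eq_forall_mem_Icc_hasDerivWithinAt₀
  have hY0 : Y t₀ = ((1:ℝ), w₀) := hY0'
  have hYc : ContinuousOn Y (Icc t₀ t₁) := fun t ht => (hYd t ht).continuousWithinAt
  -- a priori bound
  have hball : ∀ t ∈ Icc t₀ t₁, ‖Y t - ((1:ℝ), w₀)‖ ≤ 1/4 := by
    have hgron := norm_le_gronwallBound_of_norm_deriv_right_le
      (f := fun t => Y t - ((1:ℝ), w₀)) (f' := fun t => vc t (Y t)) (δ := 0) (K := 0) (ε := C)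
      (a := t₀) (b := t₁)
      (hYc.sub continuousOn_const)
      (fun x hx => ((hYd x (Ico_subset_Icc_self hx)).sub_const _).mono_of_mem_nhdsWithin
        (icc_mem_nhdsWithin_Ici hx))
      (by simp [hY0])
      (fun x hx => by
        rw [zero_mul, zero_add]; exact hvcB x (Ico_subset_Icc_self hx) (Y x))
    intro t ht
    have h1 := hgron t ht
    rw [gronwallBound_K0] at h1
    have h2 : t - t₀ ≤ 2*δ := by
      have := ht.2; rw [ht₀def]; rw [ht₁def] at this; linarith
    have h3 : C * (t - t₀) ≤ C * (2*δ) :=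
      mul_le_mul_of_nonneg_left h2 hC.le
    simp only at h1
    refine le_trans h1 ?_
    linarith
  have hb1 : ∀ t ∈ Icc t₀ t₁, |(Y t).1 - 1| ≤ 1/4 := by
    intro t ht
    have h1 := norm_fst_le (Y t - ((1:ℝ), w₀))
    rw [Prod.fst_sub, Real.norm_eq_abs] at h1
    exact le_trans h1 (hball t ht)
  have hb2 : ∀ t ∈ Icc t₀ t₁, |(Y t).2 - w₀| ≤ 1/4 := by
    intro t ht
    have h1 := norm_snd_le (Y t - ((1:ℝ), w₀))
    rw [Prod.snd_sub, Real.norm_eq_abs] at h1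
    exact le_trans h1 (hball t ht)
  have hcl1Y : ∀ t ∈ Icc t₀ t₁, cl1 ((Y t).1) = (Y t).1 := by
    intro t ht
    have h1 := abs_le.1 (hb1 t ht)
    exact clamp_eq (by linarith [h1.1]) (by linarith [h1.2])
  have hcl2Y : ∀ t ∈ Icc t₀ t₁, cl2 ((Y t).2) = (Y t).2 := by
    intro t ht
    have h1 := abs_le.1 (hb2 t ht)
    exact clamp_eq (by linarith [h1.1]) (by linarith [h1.2])
  have hvcv : ∀ t ∈ Icc t₀ t₁, vc t (Y t) = v t (Y t) := by
    intro t ht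
    rw [hvcdef, hvdef]
    simp only
    rw [hcl1Y t ht, hcl2Y t ht]
  have hYdv : ∀ t ∈ Icc t₀ t₁, HasDerivWithinAt Y (v t (Y t)) (Icc t₀ t₁) t :=
    fun t ht => (hvcv t ht) ▸ hYd t ht
  -- globally continuous extension of Y
  have hclmap : ∀ r : ℝ, max t₀ (min r t₁) ∈ Icc t₀ t₁ :=
    fun r => mem_Icc.2 (clamp_mem t₀ t₁ r ht01)
  have hclcont : Continuous (fun r : ℝ => max t₀ (min r t₁)) :=
    continuous_const.max (continuous_id.min continuous_const)
  set Ycl : ℝ → ℝ × ℝ := fun r => Y (max t₀ (min r t₁)) with hYcldef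
  have hYclc : Continuous Ycl := hYc.comp_continuous hclcont hclmap
  have hYclid : ∀ r ∈ Icc t₀ t₁, Ycl r = Y r := by
    intro r hr
    rw [hYcldef]
    simp only
    rw [clamp_eq hr.1 hr.2]
  -- the solution F and its derivative F'
  set F : ℝ → ℝ := fun r => if r ≤ t₀ then 1 else (Ycl r).1 with hFdef
  have hY01 : (Y t₀).1 = 1 := by rw [hY0]
  have hFeq : ∀ r ∈ Icc t₀ t₁, F r = (Y r).1 := by
    intro r hr
    by_cases h : r ≤ t₀
    · have hrt : r = t₀ := le_antisymm h hr.1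
      subst hrt
      rw [hFdef]; simp only
      rw [if_pos (le_refl r), hY01]
    · rw [hFdef]; simp only [if_neg h]; rw [hYclid r hr]
  have hFone : ∀ r, 2 ≤ r → r ≤ t₀ → F r = 1 := by
    intro r _ h; rw [hFdef]; simp only [if_pos h]
  have hFcont : Continuous F := by
    rw [hFdef]
    refine Continuous.if_le continuous_const (continuous_fst.comp hYclc)
      continuous_id continuous_const ?_
    intro x hx
    rw [hx, hYclid t₀ ⟨le_refl _, ht01⟩, hY01]
  set F' : ℝ → ℝ := fun r => (vc r (Ycl r)).1 with hF'def
  have hFd : ∀ r ∈ Icc t₀ t₁, HasDerivWithinAt F (F' r) (Icc t₀ t₁) r := by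
    intro r hr
    have h1 : HasDerivWithinAt (fun t => (Y t).1) ((vc r (Y r)).1) (Icc t₀ t₁) r :=
      (ContinuousLinearMap.fst ℝ ℝ ℝ).hasFDerivAt.comp_hasDerivWithinAt r (hYd r hr)
    have h2 : F' r = (vc r (Y r)).1 := by
      rw [hF'def]; simp only; rw [hYclid r hr]
    rw [h2]
    exact h1.congr (fun y hy => hFeq y hy) (hFeq r hr)
  have hF'c : ContinuousOn F' (Icc t₀ t₁) := by
    have hV' : ContinuousOn V (Icc t₀ t₁) := hVc.mono hsub0
    have c1 : Continuous (fun r => cl1 ((Ycl r).1)) := hcl1c.comp (continuous_fst.comp hYclc)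
    have c2 : Continuous (fun r => cl2 ((Ycl r).2)) := hcl2c.comp (continuous_snd.comp hYclc)
    rw [hF'def]
    simp only [hvcdef]
    exact continuousOn_const.mul ((((hV'.sub continuousOn_const).sub
      ((continuous_const.mul c1).continuousOn)).sub
      ((continuous_const.mul (c1.pow 2)).continuousOn)).sub
      ((continuous_const.mul ((Real.continuous_exp.comp c2.neg))).continuousOn))
  -- integral identity
  have hintg : Continuous (fun x => 2*(1+F x)) :=
    continuous_const.mul (continuous_const.add hFcont)
  have hFint : ∀ r ∈ Icc t₀ t₁, (∫ x in (2:ℝ)..r, 2*(1+F x)) = (Y r).2 := by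
    intro r hr
    have hsplit : (∫ x in (2:ℝ)..r, 2*(1+F x))
        = (∫ x in (2:ℝ)..t₀, 2*(1+F x)) + ∫ x in t₀..r, 2*(1+F x) :=
      (intervalIntegral.integral_add_adjacent_intervals
        (hintg.intervalIntegrable _ _) (hintg.intervalIntegrable _ _)).symm
    have h1 : (∫ x in (2:ℝ)..t₀, 2*(1+F x)) = w₀ := by
      rw [intervalIntegral.integral_congr (g := fun _ => (4:ℝ))
        (fun x hx => by
          rw [uIcc_of_le h2t₀] at hx
          rw [hFone x hx.1 hx.2]; norm_num)]
      rw [intervalIntegral.integral_const, smul_eq_mul, hw₀def, ht₀def]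
      ring
    have h2 : (∫ x in t₀..r, 2*(1+F x)) = (Y r).2 - w₀ := by
      have hY2w : (Y t₀).2 = w₀ := by rw [hY0]
      have := intervalIntegral.integral_eq_sub_of_hasDeriv_right_of_le hr.1
        (f := fun t => (Y t).2) (f' := fun x => 2*(1+F x))
        (continuous_snd.comp_continuousOn
          (hYc.mono (Icc_subset_Icc le_rfl hr.2)))
        (fun x hx => by
          have hxI : x ∈ Icc t₀ t₁ := ⟨hx.1.le, le_trans hx.2.le hr.2⟩
          have hnb : Icc t₀ t₁ ∈ nhds x :=
            Icc_mem_nhds hx.1 (lt_of_lt_of_le hx.2 hr.2)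
          have hd := (hYdv x hxI).hasDerivAt hnb
          have hd2 : HasDerivAt (fun t => (Y t).2) ((v x (Y x)).2) x :=
            (ContinuousLinearMap.snd ℝ ℝ ℝ).hasFDerivAt.comp_hasDerivAt x hd
          have hval : (v x (Y x)).2 = 2*(1+F x) := by
            rw [hFeq x hxI, hvdef]; simp only; ring
          have hfin : HasDerivWithinAt (fun t => (Y t).2) (2*(1+F x)) (Ioi x) x := by
            rw [← hval]; exact hd2.hasDerivWithinAt
          exact hfin)
        (hintg.intervalIntegrable _ _)
      rw [this]
      show (Y r).2 - (Y t₀).2 = (Y r).2 - w₀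
      rw [hY2w]
    rw [hsplit, h1, h2]
    ring
  -- the ODE equation for F
  have hFeqn : ∀ r ∈ Icc t₀ t₁,
      τ^2 + nR^2/2 * F r + nR^2/4 * (F r)^2 + nR/2 * F' r
        + lamI / Real.exp (∫ x in (2:ℝ)..r, 2*(1+F x)) = V r := by
    intro r hr
    rw [hFint r hr]
    have hF'v : F' r = (2/nR) * (V r - τ^2 - nR^2/2 * (Y r).1 - nR^2/4 * ((Y r).1)^2
        - lamI * Real.exp (-(Y r).2)) := by
      rw [hF'def]; simp only; rw [hYclid r hr]
      simp only [hvcdef, hcl1Y r hr, hcl2Y r hr]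
    rw [hF'v, hFeq r hr]
    have hexp : lamI / Real.exp ((Y r).2) = lamI * Real.exp (-(Y r).2) := by
      rw [Real.exp_neg]; ring
    rw [hexp]
    field_simp
    ring
  -- bounds
  have hFbd : ∀ r ∈ Icc t₀ t₁, 1/2 < F r ∧ F r < 2 := by
    intro r hr
    have h1 := abs_le.1 (hb1 r hr)
    rw [hFeq r hr]
    constructor <;> [linarith [h1.1]; linarith [h1.2]]
  refine ⟨F, F', hFone, hFd, hF'c, hFeqn, hFbd, ?_⟩
  -- uniqueness
  intro G G' hG1 hGd hG'c hGeq
  have hGc : ContinuousOn G (Icc t₀ t₁) := fun t ht => (hGd t ht).continuousWithinAt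
  set Gcl : ℝ → ℝ := fun r => G (max t₀ (min r t₁)) with hGcldef
  have hGclc : Continuous Gcl := hGc.comp_continuous hclcont hclmap
  have hGclid : ∀ r ∈ Icc t₀ t₁, Gcl r = G r := by
    intro r hr
    rw [hGcldef]; simp only; rw [clamp_eq hr.1 hr.2]
  have hGt₀ : G t₀ = 1 := hG1 t₀ h2t₀ (le_refl _)
  have hgc : Continuous (fun x => 2*(1+Gcl x)) :=
    continuous_const.mul (continuous_const.add hGclc)
  set Wg : ℝ → ℝ := fun r => w₀ + ∫ x in t₀..r, 2*(1+Gcl x) with hWgdef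
  have hWgd : ∀ r, HasDerivAt Wg (2*(1+Gcl r)) r := by
    intro r
    rw [hWgdef]
    exact (hgc.integral_hasStrictDerivAt t₀ r).hasDerivAt.const_add w₀
  have hWgc : Continuous Wg := continuous_iff_continuousAt.2 fun r => (hWgd r).continuousAt
  have hWgt₀ : Wg t₀ = w₀ := by
    rw [hWgdef]; simp [intervalIntegral.integral_same]
  -- integral identity for G
  have hGint : ∀ r ∈ Icc t₀ t₁, (∫ x in (2:ℝ)..r, 2*(1+G x)) = Wg r := by
    intro r hr
    set gt : ℝ → ℝ := fun x => if x ≤ t₀ then (4:ℝ) else 2*(1+Gcl x) with hgtdef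
    have hgtc : Continuous gt := by
      rw [hgtdef]
      refine Continuous.if_le continuous_const hgc continuous_id continuous_const ?_
      intro x hx
      rw [hx, hGclid t₀ ⟨le_refl _, ht01⟩, hGt₀]
      norm_num
    have e1 : (∫ x in (2:ℝ)..r, 2*(1+G x)) = ∫ x in (2:ℝ)..r, gt x := by
      apply intervalIntegral.integral_congr
      intro x hx
      rw [uIcc_of_le (le_trans h2t₀ hr.1)] at hx
      by_cases h : x ≤ t₀
      · rw [hgtdef]; simp only [if_pos h]; rw [hG1 x hx.1 h]; norm_num
      · rw [hgtdef]; simp only [if_neg h]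
        rw [hGclid x ⟨le_of_not_ge h, le_trans hx.2 hr.2⟩]
    have e2 : (∫ x in (2:ℝ)..r, gt x) = (∫ x in (2:ℝ)..t₀, gt x) + ∫ x in t₀..r, gt x :=
      (intervalIntegral.integral_add_adjacent_intervals
        (hgtc.intervalIntegrable _ _) (hgtc.intervalIntegrable _ _)).symm
    have e3 : (∫ x in (2:ℝ)..t₀, gt x) = w₀ := by
      rw [intervalIntegral.integral_congr (g := fun _ => (4:ℝ))
        (fun x hx => by
          rw [uIcc_of_le h2t₀] at hx
          rw [hgtdef]; simp only [if_pos hx.2])]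
      rw [intervalIntegral.integral_const, smul_eq_mul, hw₀def, ht₀def]
      ring
    have e4 : (∫ x in t₀..r, gt x) = ∫ x in t₀..r, 2*(1+Gcl x) := by
      apply intervalIntegral.integral_congr
      intro x hx
      rw [uIcc_of_le hr.1] at hx
      by_cases h : x ≤ t₀
      · have hxt : x = t₀ := le_antisymm h hx.1
        rw [hgtdef]; simp only [if_pos h]
        rw [hxt, hGclid t₀ ⟨le_refl _, ht01⟩, hGt₀]
        norm_num
      · rw [hgtdef]; simp only [if_neg h]
    rw [e1, e2, e3, e4, hWgdef]
  -- the coupled trajectory for G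
  set Z : ℝ → ℝ × ℝ := fun r => (G r, Wg r) with hZdef
  have hZc : ContinuousOn Z (Icc t₀ t₁) := hGc.prodMk hWgc.continuousOn
  obtain ⟨ρ1, hρ1⟩ := isCompact_Icc.exists_bound_of_continuousOn hZc
  obtain ⟨ρ2, hρ2⟩ := isCompact_Icc.exists_bound_of_continuousOn hYc
  set ρ : ℝ := max (max ρ1 ρ2) 0 with hρdef
  have hρ0 : 0 ≤ ρ := le_max_right _ _
  -- Lipschitz bound for the (unclamped) field on a large ball
  have hLip : ∀ t : ℝ, LipschitzOnWith (Real.toNNReal (2 + nR + nR*ρ + 2*lamI*Real.exp ρ))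
      (v t) (Metric.closedBall (0 : ℝ × ℝ) ρ) := by
    intro t
    rw [lipschitzOnWith_iff_dist_le_mul]
    intro p hp q hq
    have hnn : 0 ≤ 2 + nR + nR*ρ + 2*lamI*Real.exp ρ := by
      nlinarith [Real.exp_pos ρ, mul_nonneg hnRpos.le hρ0, mul_pos hlam (Real.exp_pos ρ)]
    rw [Real.coe_toNNReal _ hnn]
    have hpn : ‖p‖ ≤ ρ := by rwa [Metric.mem_closedBall, dist_zero_right] at hp
    have hqn : ‖q‖ ≤ ρ := by rwa [Metric.mem_closedBall, dist_zero_right] at hq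
    have hp1 : |p.1| ≤ ρ := le_trans (by rw [← Real.norm_eq_abs]; exact norm_fst_le p) hpn
    have hq1 : |q.1| ≤ ρ := le_trans (by rw [← Real.norm_eq_abs]; exact norm_fst_le q) hqn
    have hp2 : |p.2| ≤ ρ := le_trans (by rw [← Real.norm_eq_abs]; exact norm_snd_le p) hpn
    have hq2 : |q.2| ≤ ρ := le_trans (by rw [← Real.norm_eq_abs]; exact norm_snd_le q) hqn
    have hd1 : |p.1 - q.1| ≤ dist p q := by
      rw [← Real.dist_eq, Prod.dist_eq]; exact le_max_left _ _
    have hexp : |Real.exp (-p.2) - Real.exp (-q.2)| ≤ Real.exp ρ * dist p q := by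
      have h1 := exp_diff_le (show -p.2 ≤ ρ by
        have := abs_le.1 hp2; linarith [this.1]) (show -q.2 ≤ ρ by
        have := abs_le.1 hq2; linarith [this.1])
      have h2 : |(-p.2) - (-q.2)| = |p.2 - q.2| := by rw [abs_sub_comm]; ring_nf
      rw [h2] at h1
      refine le_trans h1 (mul_le_mul_of_nonneg_left ?_ (Real.exp_pos ρ).le)
      rw [← Real.dist_eq, Prod.dist_eq]; exact le_max_right _ _
    simp only [hvdef]
    exact vfield_dist_le hn1 hlam.le hp1 hq1 hd1 dist_nonneg hexp
  have hZmem : ∀ t ∈ Ico t₀ t₁, Z t ∈ Metric.closedBall (0 : ℝ × ℝ) ρ := by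
    intro t ht
    rw [Metric.mem_closedBall, dist_zero_right]
    exact le_trans (hρ1 t (Ico_subset_Icc_self ht))
      (le_trans (le_max_left _ _) (le_max_left _ _))
  have hYmem : ∀ t ∈ Ico t₀ t₁, Y t ∈ Metric.closedBall (0 : ℝ × ℝ) ρ := by
    intro t ht
    rw [Metric.mem_closedBall, dist_zero_right]
    exact le_trans (hρ2 t (Ico_subset_Icc_self ht))
      (le_trans (le_max_right _ _) (le_max_left _ _))
  have hZd : ∀ t ∈ Ico t₀ t₁, HasDerivWithinAt Z (v t (Z t)) (Ici t) t := by
    intro t ht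
    have htI : t ∈ Icc t₀ t₁ := Ico_subset_Icc_self ht
    have h1 : HasDerivWithinAt G (G' t) (Ici t) t :=
      (hGd t htI).mono_of_mem_nhdsWithin (icc_mem_nhdsWithin_Ici ht)
    have h2 : HasDerivWithinAt Wg (2*(1+Gcl t)) (Ici t) t := (hWgd t).hasDerivWithinAt
    have h3 : HasDerivWithinAt Z (G' t, 2*(1+Gcl t)) (Ici t) t := by
      rw [hZdef]; exact h1.prodMk h2
    have hG't : G' t = (2/nR) * (V t - τ^2 - nR^2/2 * G t - nR^2/4 * (G t)^2
        - lamI * Real.exp (-(Wg t))) := by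
      have he := hGeq t htI
      rw [hGint t htI] at he
      have hexp2 : lamI / Real.exp (Wg t) = lamI * Real.exp (-(Wg t)) := by
        rw [Real.exp_neg]; ring
      rw [hexp2] at he
      field_simp at he ⊢
      linarith
    have h4 : v t (Z t) = (G' t, 2*(1+Gcl t)) := by
      rw [hvdef]; simp only [hZdef, Prod.mk.injEq]
      constructor
      · exact hG't.symm
      · rw [hGclid t htI]; ring
    rw [h4]
    exact h3
  have hYd2 : ∀ t ∈ Ico t₀ t₁, HasDerivWithinAt Y (v t (Y t)) (Ici t) t :=
    fun t ht => (hYdv t (Ico_subset_Icc_self ht)).mono_of_mem_nhdsWithin (icc_mem_nhdsWithin_Ici ht)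
  have hinit : Z t₀ = Y t₀ := by
    rw [hZdef]; simp only; rw [hGt₀, hWgt₀, hY0]
  have huniq := ODE_solution_unique_of_mem_Icc_right (fun t _ => hLip t) hZc hZd hZmem hYc hYd2 hYmem hinit
  intro r hr
  have hZY := huniq hr
  have hG : G r = (Y r).1 := by
    have := congrArg Prod.fst hZY
    simpa [hZdef] using this
  rw [hG, ← hFeq r hr]
end
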